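/- arXiv:1904.02447 — 4 statements merged into one kernel-verified Lean document; each statement's English description precedes it below -/
import Mathlib

section
/- (Monotonicity of f_{T,σ²} with respect to the transmission window.) Assume O_{T₁} is positive definite (the pair (A,C) is observable over [0,T₁]). Then for every T₁ > 0, every positive integer h, T₂ := h·T₁, and every positive semidefinite Σ ∈ ℝ^{m×m}, it holds that f_{T₂,σ²}(Σ) ≥ f_{T₁,σ²}(Σ). -/
open Matrix MeasureTheory
open scoped Matrix

attribute [local instance] Matrix.frobeniusNormedAddCommGroup Matrix.frobeniusNormedSpace

noncomputable section

/-- `A` is Hurwitz stable: every complex eigenvalue of `A` has negative real part. -/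
def IsHurwitz {n : ℕ} (A : Matrix (Fin n) (Fin n) ℝ) : Prop :=
  ∀ μ ∈ spectrum ℂ (A.map (algebraMap ℝ ℂ)), μ.re < 0

/-- Observability Gramian `O_T = ∫₀^T exp(Aᵀt) CᵀC exp(At) dt`. -/
def obsGram {n p : ℕ} (A : Matrix (Fin n) (Fin n) ℝ) (C : Matrix (Fin p) (Fin n) ℝ)
    (T : ℝ) : Matrix (Fin n) (Fin n) ℝ :=
  ∫ t in (0:ℝ)..T,
    NormedSpace.exp (t • Aᵀ) * (Cᵀ * C) * NormedSpace.exp (t • A)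

/-- Infinite-horizon controllability Gramian
`W_T(Σ) = Σ_{k=0}^∞ exp(AkT) BΣBᵀ exp(AᵀkT)` of the sampled pair. -/
def ctrlGram {n m : ℕ} (A : Matrix (Fin n) (Fin n) ℝ) (B : Matrix (Fin n) (Fin m) ℝ)
    (T : ℝ) (S : Matrix (Fin m) (Fin m) ℝ) : Matrix (Fin n) (Fin n) ℝ :=
  ∑' k : ℕ, NormedSpace.exp (((k : ℝ) * T) • A) * (B * S * Bᵀ) *
    NormedSpace.exp (((k : ℝ) * T) • Aᵀ)

/-- The function
`f_{T,σ²}(Σ) = (1/2) log₂ ( det(σ²I + O_T W_T(Σ)) / det(σ²I + O_T (W_T(Σ) − BΣBᵀ)) )`. -/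
def infoFun {n m p : ℕ} (A : Matrix (Fin n) (Fin n) ℝ) (B : Matrix (Fin n) (Fin m) ℝ)
    (C : Matrix (Fin p) (Fin n) ℝ) (T σ2 : ℝ) (S : Matrix (Fin m) (Fin m) ℝ) : ℝ :=
  (1 / 2) * Real.logb 2
    ((σ2 • (1 : Matrix (Fin n) (Fin n) ℝ) + obsGram A C T * ctrlGram A B T S).det /
     (σ2 • (1 : Matrix (Fin n) (Fin n) ℝ) +
        obsGram A C T * (ctrlGram A B T S - B * S * Bᵀ)).det)

/-- The information capacity
`C_T(P,σ²) = sup { f_{T,σ²}(Σ) : Σ positive semidefinite, tr Σ = P }`. -/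
def capacity {n m p : ℕ} (A : Matrix (Fin n) (Fin n) ℝ) (B : Matrix (Fin n) (Fin m) ℝ)
    (C : Matrix (Fin p) (Fin n) ℝ) (T σ2 P : ℝ) : ℝ :=
  sSup {x : ℝ | ∃ S : Matrix (Fin m) (Fin m) ℝ,
    S.PosSemidef ∧ S.trace = P ∧ x = infoFun A B C T σ2 S}

/-- The information rate `R_T(P,σ²) = C_T(P,σ²)/T`. -/
def rate {n m p : ℕ} (A : Matrix (Fin n) (Fin n) ℝ) (B : Matrix (Fin n) (Fin m) ℝ)
    (C : Matrix (Fin p) (Fin n) ℝ) (T σ2 P : ℝ) : ℝ :=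
  capacity A B C T σ2 P / T

end


attribute [local instance] Matrix.frobeniusNormedRing Matrix.frobeniusNormedAlgebra

namespace Stmt5Aux

open Filter NormedSpace
open scoped Topology


variable {d : ℕ}

/-- symmetric matrices move across dotProduct -/
lemma dot_symm {M : Matrix (Fin d) (Fin d) ℝ} (hM : M.IsHermitian) (a b : Fin d → ℝ) :
    (M *ᵥ a) ⬝ᵥ b = a ⬝ᵥ (M *ᵥ b) := by
  rw [dotProduct_comm, dotProduct_mulVec, ← mulVec_transpose]
  have : Mᵀ = M := by rw [← conjTranspose_eq_transpose_of_trivial]; exact hM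
  rw [this, dotProduct_comm]

lemma key_quad {A : Matrix (Fin d) (Fin d) ℝ} (hA : A.PosSemidef) (u y : Fin d → ℝ) :
    2 * ((A *ᵥ u) ⬝ᵥ y) - y ⬝ᵥ A *ᵥ y ≤ (A *ᵥ u) ⬝ᵥ u := by
  have h0 : 0 ≤ (y - u) ⬝ᵥ A *ᵥ (y - u) := by simpa using hA.dotProduct_mulVec_nonneg (y - u)
  have hs : (A *ᵥ u) ⬝ᵥ y = u ⬝ᵥ (A *ᵥ y) := dot_symm hA.isHermitian u y
  have hexp : (y - u) ⬝ᵥ A *ᵥ (y - u)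
      = y ⬝ᵥ A *ᵥ y - u ⬝ᵥ (A *ᵥ y) - ((A *ᵥ u) ⬝ᵥ y - (A *ᵥ u) ⬝ᵥ u) := by
    rw [Matrix.mulVec_sub, sub_dotProduct, dotProduct_sub, dotProduct_sub]
    have : (A *ᵥ u) ⬝ᵥ y = y ⬝ᵥ (A *ᵥ u) := dotProduct_comm _ _
    have h2 : (A *ᵥ u) ⬝ᵥ u = u ⬝ᵥ (A *ᵥ u) := dotProduct_comm _ _
    rw [this, h2]; ring
  rw [hexp] at h0
  have := hs
  linarith

lemma inv_antitone {A B : Matrix (Fin d) (Fin d) ℝ} (hA : A.PosDef) (hB : B.PosDef)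
    (hAB : (B - A).PosSemidef) : (A⁻¹ - B⁻¹).PosSemidef := by
  have hAi : (A⁻¹).IsHermitian := hA.isHermitian.inv
  have hBi : (B⁻¹).IsHermitian := hB.isHermitian.inv
  refine Matrix.PosSemidef.of_dotProduct_mulVec_nonneg (hAi.sub hBi) fun x => ?_
  simp only [star_trivial, sub_mulVec, dotProduct_sub]
  have hBunit : IsUnit B.det := isUnit_iff_ne_zero.2 hB.det_pos.ne'
  have hAunit : IsUnit A.det := isUnit_iff_ne_zero.2 hA.det_pos.ne'
  set y := B⁻¹ *ᵥ x with hy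
  have hxBy : B *ᵥ y = x := by
    rw [hy, mulVec_mulVec, Matrix.mul_nonsing_inv _ hBunit, one_mulVec]
  have hxAu : A *ᵥ (A⁻¹ *ᵥ x) = x := by
    rw [mulVec_mulVec, Matrix.mul_nonsing_inv _ hAunit, one_mulVec]
  have h1 : x ⬝ᵥ (B⁻¹ *ᵥ x) = 2 * (x ⬝ᵥ y) - y ⬝ᵥ B *ᵥ y := by
    have : y ⬝ᵥ B *ᵥ y = (B *ᵥ y) ⬝ᵥ y := dotProduct_comm _ _
    rw [this, hxBy, ← hy]; ring
  have h2 : y ⬝ᵥ A *ᵥ y ≤ y ⬝ᵥ B *ᵥ y := by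
    have := hAB.dotProduct_mulVec_nonneg y; simp only [star_trivial, sub_mulVec, dotProduct_sub] at this
    linarith
  have h3 : 2 * (x ⬝ᵥ y) - y ⬝ᵥ A *ᵥ y ≤ x ⬝ᵥ (A⁻¹ *ᵥ x) := by
    have := key_quad hA.posSemidef (A⁻¹ *ᵥ x) y
    rw [hxAu] at this
    have hc : x ⬝ᵥ (A⁻¹ *ᵥ x) = x ⬝ᵥ A⁻¹ *ᵥ x := rfl
    linarith [this]
  linarith

lemma det_one_add_psd {M : Matrix (Fin d) (Fin d) ℝ} (hM : M.PosSemidef) :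
    1 ≤ (1 + M).det := by
  have hH := hM.isHermitian
  set U : Matrix (Fin d) (Fin d) ℝ := (hH.eigenvectorUnitary : Matrix (Fin d) (Fin d) ℝ) with hU
  set D₁ : Matrix (Fin d) (Fin d) ℝ := diagonal (RCLike.ofReal ∘ hH.eigenvalues) with hD₁
  have hspec := hH.spectral_theorem
  simp only [Unitary.conjStarAlgAut_apply, Unitary.coe_star] at hspec
  have hUU : U * star U = 1 := Matrix.mem_unitaryGroup_iff.mp hH.eigenvectorUnitary.2
  have h1M : 1 + M = U * (1 + D₁) * star U := by
    rw [Matrix.mul_add, Matrix.add_mul, Matrix.mul_one, hUU, hD₁, ← hspec]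
  have h5 : U.det * (star U).det = 1 := by rw [← det_mul, hUU, det_one]
  rw [h1M, det_mul, det_mul]
  have h6 : U.det * (1 + D₁).det * (star U).det = (1 + D₁).det * (U.det * (star U).det) := by
    ring
  rw [h6, h5, mul_one]
  have h7 : (1 : Matrix (Fin d) (Fin d) ℝ) + D₁ = diagonal (fun i => 1 + hH.eigenvalues i) := by
    rw [hD₁, ← diagonal_one, diagonal_add]
    congr 1
  rw [h7, det_diagonal]
  calc (1:ℝ) = ∏ _i : Fin d, 1 := by simp
    _ ≤ ∏ i : Fin d, (1 + hH.eigenvalues i) :=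
        Finset.prod_le_prod (by simp) (fun i _ => by linarith [hM.eigenvalues_nonneg i])

noncomputable def psdSqrt {D : Matrix (Fin d) (Fin d) ℝ} (hD : D.PosSemidef) :
    Matrix (Fin d) (Fin d) ℝ :=
  (hD.1.eigenvectorUnitary : Matrix (Fin d) (Fin d) ℝ) *
    diagonal (fun i => Real.sqrt (hD.1.eigenvalues i)) *
    star (hD.1.eigenvectorUnitary : Matrix (Fin d) (Fin d) ℝ)

lemma psdSqrt_isHermitian {D : Matrix (Fin d) (Fin d) ℝ} (hD : D.PosSemidef) :
    (psdSqrt hD).IsHermitian := by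
  unfold psdSqrt
  simp only [IsHermitian, conjTranspose_eq_transpose_of_trivial, transpose_mul, diagonal_transpose,
    star_eq_conjTranspose, transpose_transpose, Matrix.mul_assoc]

lemma psdSqrt_mul_self {D : Matrix (Fin d) (Fin d) ℝ} (hD : D.PosSemidef) :
    psdSqrt hD * psdSqrt hD = D := by
  have hUU : star (hD.1.eigenvectorUnitary : Matrix (Fin d) (Fin d) ℝ) *
      (hD.1.eigenvectorUnitary : Matrix (Fin d) (Fin d) ℝ) = 1 :=
    Matrix.mem_unitaryGroup_iff'.mp hD.1.eigenvectorUnitary.2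
  have hspec := hD.1.spectral_theorem
  simp only [Unitary.conjStarAlgAut_apply, Unitary.coe_star] at hspec
  unfold psdSqrt
  set U : Matrix (Fin d) (Fin d) ℝ := (hD.1.eigenvectorUnitary : Matrix (Fin d) (Fin d) ℝ)
  calc U * diagonal (fun i => Real.sqrt (hD.1.eigenvalues i)) * star U *
        (U * diagonal (fun i => Real.sqrt (hD.1.eigenvalues i)) * star U)
      = U * (diagonal (fun i => Real.sqrt (hD.1.eigenvalues i)) * (star U * U) *
        diagonal (fun i => Real.sqrt (hD.1.eigenvalues i))) * star U := by
        simp only [Matrix.mul_assoc]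
    _ = U * diagonal (RCLike.ofReal ∘ hD.1.eigenvalues) * star U := by
        rw [hUU, Matrix.mul_one, diagonal_mul_diagonal]
        congr 3
        funext i
        simp [Real.mul_self_sqrt (hD.eigenvalues_nonneg i)]
    _ = D := hspec.symm

lemma det_add_psd {A D : Matrix (Fin d) (Fin d) ℝ} (hA : A.PosDef) (hD : D.PosSemidef) :
    (A + D).det = A.det * (1 + (psdSqrt hD) * A⁻¹ * (psdSqrt hD)).det := by
  have hAunit : IsUnit A.det := isUnit_iff_ne_zero.2 hA.det_pos.ne'
  have hfac : A + D = A * (1 + A⁻¹ * D) := by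
    rw [Matrix.mul_add, Matrix.mul_one, ← Matrix.mul_assoc,
      Matrix.mul_nonsing_inv _ hAunit, Matrix.one_mul]
  rw [hfac, det_mul]
  congr 1
  have h2 : A⁻¹ * D = (A⁻¹ * (psdSqrt hD)) * (psdSqrt hD) := by
    conv_rhs => rw [Matrix.mul_assoc, psdSqrt_mul_self hD]
  calc (1 + A⁻¹ * D).det = (1 + (A⁻¹ * (psdSqrt hD)) * (psdSqrt hD)).det := by rw [h2]
    _ = (1 + (psdSqrt hD) * (A⁻¹ * (psdSqrt hD))).det := Matrix.det_one_add_mul_comm _ _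
    _ = (1 + (psdSqrt hD) * A⁻¹ * (psdSqrt hD)).det := by rw [Matrix.mul_assoc]

lemma det_mono {A B : Matrix (Fin d) (Fin d) ℝ} (hA : A.PosDef)
    (hAB : (B - A).PosSemidef) : A.det ≤ B.det := by
  have hB : B = A + (B - A) := by abel
  rw [hB, det_add_psd hA hAB]
  have hpsd : ((psdSqrt hAB) * A⁻¹ * (psdSqrt hAB)).PosSemidef := by
    have h := hA.inv.posSemidef.conjTranspose_mul_mul_same (psdSqrt hAB)
    have hs : ((psdSqrt hAB))ᴴ = (psdSqrt hAB) := psdSqrt_isHermitian hAB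
    rwa [hs] at h
  have := det_one_add_psd hpsd
  nlinarith [hA.det_pos]

lemma ratio_mono {K₁ K₂ Q : Matrix (Fin d) (Fin d) ℝ} (hK₁ : K₁.PosDef) (hK₂ : K₂.PosDef)
    (hQ : Q.PosSemidef) (h12 : (K₁ - K₂).PosSemidef) :
    (K₁ + Q).det / K₁.det ≤ (K₂ + Q).det / K₂.det := by
  rw [det_add_psd hK₁ hQ, det_add_psd hK₂ hQ]
  rw [mul_div_cancel_left₀ _ hK₁.det_pos.ne', mul_div_cancel_left₀ _ hK₂.det_pos.ne']
  refine det_mono ?_ ?_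
  · exact Matrix.PosDef.one.add_posSemidef (by
      have h := hK₁.inv.posSemidef.conjTranspose_mul_mul_same (psdSqrt hQ)
      rwa [psdSqrt_isHermitian hQ] at h)
  · have hinv : (K₂⁻¹ - K₁⁻¹).PosSemidef := inv_antitone hK₂ hK₁ h12
    have h := hinv.conjTranspose_mul_mul_same (psdSqrt hQ)
    rw [psdSqrt_isHermitian hQ] at h
    have heq : (psdSqrt hQ) * (K₂⁻¹ - K₁⁻¹) * (psdSqrt hQ)
        = (1 + (psdSqrt hQ) * K₂⁻¹ * (psdSqrt hQ)) - (1 + (psdSqrt hQ) * K₁⁻¹ * (psdSqrt hQ)) := by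
      rw [Matrix.mul_sub, Matrix.sub_mul]; abel
    rw [heq] at h
    exact h



variable {d : ℕ}

lemma continuous_algebraMap_matrix :
    Continuous (algebraMap ℂ (Matrix (Fin d) (Fin d) ℂ)) := by
  have : (algebraMap ℂ (Matrix (Fin d) (Fin d) ℂ) : ℂ → Matrix (Fin d) (Fin d) ℂ)
      = fun c => c • (1 : Matrix (Fin d) (Fin d) ℂ) := by
    funext c; exact Algebra.algebraMap_eq_smul_one c
  rw [this]
  exact continuous_id.smul continuous_const

lemma exp_smul_one (c : ℂ) :
    exp (c • (1 : Matrix (Fin d) (Fin d) ℂ)) = Complex.exp c • 1 := by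
  rw [← Algebra.algebraMap_eq_smul_one]
  erw [← map_exp _ continuous_algebraMap_matrix]
  rw [
    Algebra.algebraMap_eq_smul_one]
  congr 1
  rw [← Complex.exp_eq_exp_ℂ]

lemma genEig_tendsto {A : Matrix (Fin d) (Fin d) ℂ} {T : ℝ} (hT : 0 < T) {μ : ℂ}
    (hμ : μ.re < 0) {v : Fin d → ℂ} {k0 : ℕ}
    (hv : ((A - μ • 1) ^ k0) *ᵥ v = 0) :
    Tendsto (fun k : ℕ => (exp (T • A)) ^ k *ᵥ v) atTop (𝓝 0) := by
  set Nm : Matrix (Fin d) (Fin d) ℂ := A - μ • 1 with hNm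
  -- vanishing powers
  have hvan : ∀ j, k0 ≤ j → Nm ^ j *ᵥ v = 0 := by
    intro j hj
    have : Nm ^ j = Nm ^ (j - k0) * Nm ^ k0 := by rw [← pow_add]; congr 1; omega
    rw [this, ← Matrix.mulVec_mulVec, hv, Matrix.mulVec_zero]
  -- the rewritten form of the iterate
  have key : ∀ k : ℕ, (exp (T • A)) ^ k *ᵥ v
      = Complex.exp ((((k : ℝ) * T : ℝ) : ℂ) * μ) •
        ∑ j ∈ Finset.range k0, (((Nat.factorial j : ℕ) : ℝ)⁻¹ * ((k : ℝ) * T) ^ j) • (Nm ^ j *ᵥ v) := by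
    intro k
    have h1 : (exp (T • A)) ^ k = exp ((k : ℕ) • (T • A)) := (Matrix.exp_nsmul k _).symm
    have h2 : (k : ℕ) • (T • A)
        = ((((k : ℝ) * T : ℝ) : ℂ) * μ) • (1 : Matrix (Fin d) (Fin d) ℂ)
          + ((k : ℝ) * T) • Nm := by
      have e0 : (k : ℕ) • (T • A) = ((k : ℝ) * T) • A := by
        rw [← Nat.cast_smul_eq_nsmul ℝ k (T • A), smul_smul]
      have e1 : ((((k : ℝ) * T : ℝ) : ℂ) * μ) • (1 : Matrix (Fin d) (Fin d) ℂ)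
          = ((k : ℝ) * T) • (μ • (1 : Matrix (Fin d) (Fin d) ℂ)) := by
        rw [mul_smul, ← Complex.coe_algebraMap, algebraMap_smul]
      rw [e0, hNm, smul_sub, e1]
      abel
    have hcomm : Commute (((((k : ℝ) * T : ℝ) : ℂ) * μ) • (1 : Matrix (Fin d) (Fin d) ℂ))
        (((k : ℝ) * T) • Nm) := by
      unfold Commute SemiconjBy
      rw [smul_mul_assoc, smul_mul_assoc, mul_smul_comm, mul_smul_comm, one_mul, mul_one,
        smul_comm]
    rw [h1, h2, Matrix.exp_add_of_commute _ _ hcomm, exp_smul_one, smul_mul_assoc, one_mul,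
      Matrix.smul_mulVec]
    congr 1
    -- exp of the nilpotent-on-v part applied to v
    have hexp : exp (((k : ℝ) * T) • Nm)
        = ∑' j : ℕ, (((Nat.factorial j : ℕ) : ℝ)⁻¹) • (((k : ℝ) * T) • Nm) ^ j := by
      rw [exp_eq_tsum ℝ]
    -- continuous linear map M ↦ M *ᵥ v
    let Φ : Matrix (Fin d) (Fin d) ℂ →L[ℝ] (Fin d → ℂ) :=
      LinearMap.toContinuousLinearMap
        { toFun := fun M => M *ᵥ v
          map_add' := fun M N => Matrix.add_mulVec M N v
          map_smul' := fun c M => Matrix.smul_mulVec c M v }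
    have hΦ : ∀ M : Matrix (Fin d) (Fin d) ℂ, Φ M = M *ᵥ v := fun _ => rfl
    have hsum : Summable fun j : ℕ => (((Nat.factorial j : ℕ) : ℝ)⁻¹) • (((k : ℝ) * T) • Nm) ^ j :=
      expSeries_summable' (𝕂 := ℝ) _
    calc exp (((k : ℝ) * T) • Nm) *ᵥ v
        = Φ (∑' j : ℕ, (((Nat.factorial j : ℕ) : ℝ)⁻¹) • (((k : ℝ) * T) • Nm) ^ j) := by rw [← hexp, hΦ]
      _ = ∑' j : ℕ, Φ ((((Nat.factorial j : ℕ) : ℝ)⁻¹) • (((k : ℝ) * T) • Nm) ^ j) := Φ.map_tsum hsum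
      _ = ∑ j ∈ Finset.range k0, (((Nat.factorial j : ℕ) : ℝ)⁻¹ * ((k : ℝ) * T) ^ j) • (Nm ^ j *ᵥ v) := by
          rw [tsum_eq_sum (s := Finset.range k0)]
          · refine Finset.sum_congr rfl fun j _ => ?_
            rw [hΦ, smul_pow, smul_mulVec, smul_mulVec, smul_smul]
          · intro j hj
            rw [hΦ, smul_pow, smul_mulVec, smul_mulVec,
              hvan j (by simpa using hj), smul_zero, smul_zero]
  -- now squeeze
  have hnorm : ∀ k : ℕ, ‖(exp (T • A)) ^ k *ᵥ v‖
      ≤ ∑ j ∈ Finset.range k0,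
          (((Nat.factorial j : ℕ) : ℝ)⁻¹ * ‖Nm ^ j *ᵥ v‖) * (((k : ℝ) * T) ^ j * Real.exp (((k : ℝ) * T) * μ.re)) := by
    intro k
    rw [key k, norm_smul]
    have habs : ‖Complex.exp ((((k : ℝ) * T : ℝ) : ℂ) * μ)‖ = Real.exp (((k : ℝ) * T) * μ.re) := by
      rw [Complex.norm_exp]
      congr 1
      simp [Complex.mul_re]
    rw [habs]
    calc Real.exp (((k : ℝ) * T) * μ.re) *
          ‖∑ j ∈ Finset.range k0, (((Nat.factorial j : ℕ) : ℝ)⁻¹ * ((k : ℝ) * T) ^ j) • (Nm ^ j *ᵥ v)‖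
        ≤ Real.exp (((k : ℝ) * T) * μ.re) *
          ∑ j ∈ Finset.range k0, ‖(((Nat.factorial j : ℕ) : ℝ)⁻¹ * ((k : ℝ) * T) ^ j) • (Nm ^ j *ᵥ v)‖ := by
          exact mul_le_mul_of_nonneg_left (norm_sum_le _ _) (Real.exp_pos _).le
      _ ≤ ∑ j ∈ Finset.range k0,
          (((Nat.factorial j : ℕ) : ℝ)⁻¹ * ‖Nm ^ j *ᵥ v‖) * (((k : ℝ) * T) ^ j * Real.exp (((k : ℝ) * T) * μ.re)) := by
          rw [Finset.mul_sum]
          refine Finset.sum_le_sum fun j _ => ?_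
          rw [norm_smul]
          have h1 : ‖((Nat.factorial j : ℕ) : ℝ)⁻¹ * ((k : ℝ) * T) ^ j‖ = ((Nat.factorial j : ℕ) : ℝ)⁻¹ * ((k : ℝ) * T) ^ j := by
            rw [Real.norm_eq_abs, abs_of_nonneg]
            positivity
          rw [h1]; ring_nf; rfl
  refine squeeze_zero_norm hnorm ?_
  -- the bound tends to zero
  have : Tendsto (fun s : ℝ => s) atTop atTop := tendsto_id
  have hkT : Tendsto (fun k : ℕ => (k : ℝ) * T) atTop atTop :=
    Tendsto.atTop_mul_const hT tendsto_natCast_atTop_atTop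
  have hterm : ∀ j : ℕ, Tendsto (fun s : ℝ => s ^ j * Real.exp (s * μ.re)) atTop (𝓝 0) := by
    intro j
    have hc : 0 < -μ.re := by linarith
    have h1 : Tendsto (fun s : ℝ => (-μ.re * s) ^ j * Real.exp (-(-μ.re * s))) atTop (𝓝 0) :=
      (Real.tendsto_pow_mul_exp_neg_atTop_nhds_zero j).comp
        (Tendsto.const_mul_atTop hc tendsto_id)
    have h2 : Tendsto (fun s : ℝ => ((-μ.re) ^ j)⁻¹ * ((-μ.re * s) ^ j * Real.exp (-(-μ.re * s))))
        atTop (𝓝 0) := by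
      simpa using h1.const_mul ((-μ.re) ^ j)⁻¹
    refine h2.congr fun s => ?_
    rw [mul_pow, ← mul_assoc, ← mul_assoc, inv_mul_cancel₀ (by positivity), one_mul]
    congr 2
    ring
  have hsumt : Tendsto (fun k : ℕ => ∑ j ∈ Finset.range k0,
      (((Nat.factorial j : ℕ) : ℝ)⁻¹ * ‖Nm ^ j *ᵥ v‖) *
        (((k : ℝ) * T) ^ j * Real.exp (((k : ℝ) * T) * μ.re))) atTop (𝓝 0) := by
    have : ∀ j ∈ Finset.range k0, Tendsto (fun k : ℕ =>
        (((Nat.factorial j : ℕ) : ℝ)⁻¹ * ‖Nm ^ j *ᵥ v‖) *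
          (((k : ℝ) * T) ^ j * Real.exp (((k : ℝ) * T) * μ.re))) atTop (𝓝 0) := by
      intro j _
      have := ((hterm j).comp hkT).const_mul (((Nat.factorial j : ℕ) : ℝ)⁻¹ * ‖Nm ^ j *ᵥ v‖)
      simpa using this
    have h := tendsto_finset_sum (Finset.range k0) this
    simpa using h
  exact hsumt

lemma pow_mulVec_tendsto_zero {A : Matrix (Fin d) (Fin d) ℝ} (hA : IsHurwitz A) {T : ℝ}
    (hT : 0 < T) (v : Fin d → ℂ) :
    Tendsto (fun k : ℕ => (exp (T • A.map (algebraMap ℝ ℂ))) ^ k *ᵥ v) atTop (𝓝 0) := by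
  set Ac : Matrix (Fin d) (Fin d) ℂ := A.map (algebraMap ℝ ℂ) with hAc
  let S : Submodule ℂ (Fin d → ℂ) :=
    { carrier := {w | Tendsto (fun k : ℕ => (exp (T • Ac)) ^ k *ᵥ w) atTop (𝓝 0)}
      add_mem' := fun hx hy => by
        simpa [Matrix.mulVec_add] using Tendsto.add hx hy
      zero_mem' := by
        simpa [Matrix.mulVec_zero] using (tendsto_const_nhds :
          Tendsto (fun _ : ℕ => (0 : Fin d → ℂ)) atTop (𝓝 0))
      smul_mem' := fun c x hx => by
        have := hx.const_smul c
        simpa [Matrix.mulVec_smul] using this }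
  have hS : ∀ w, w ∈ S → Tendsto (fun k : ℕ => (exp (T • Ac)) ^ k *ᵥ w) atTop (𝓝 0) :=
    fun w hw => hw
  suffices h : (⊤ : Submodule ℂ (Fin d → ℂ)) ≤ S by
    exact hS v (h trivial)
  set f : Module.End ℂ (Fin d → ℂ) := Matrix.toLinAlgEquiv' Ac with hf
  rw [← Module.End.iSup_maxGenEigenspace_eq_top f]
  refine iSup_le fun μ => fun w hw => ?_
  rcases Module.End.mem_maxGenEigenspace f μ w |>.mp hw with ⟨k0, hk0⟩
  by_cases hw0 : w = 0
  · subst hw0; exact S.zero_mem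
  -- μ is an eigenvalue, hence in the spectrum
  have hμspec : μ ∈ spectrum ℂ Ac := by
    have hgen : f.HasGenEigenvalue μ k0 := by
      rw [Module.End.hasGenEigenvalue_iff]
      intro hbot
      have : w ∈ f.genEigenspace μ k0 := by
        rw [Module.End.mem_genEigenspace]
        exact ⟨k0, le_rfl, by simpa using hk0⟩
      rw [hbot] at this
      exact hw0 (by simpa using this)
    have heig : f.HasEigenvalue μ := Module.End.hasEigenvalue_of_hasGenEigenvalue hgen
    have : μ ∈ spectrum ℂ f := Module.End.hasEigenvalue_iff_mem_spectrum.mp heig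
    rwa [hf, AlgEquiv.spectrum_eq (Matrix.toLinAlgEquiv' (R := ℂ) (n := Fin d)) Ac] at this
  have hμ : μ.re < 0 := hA μ hμspec
  -- translate the endomorphism power condition to matrices
  have hvmat : ((Ac - μ • 1) ^ k0) *ᵥ w = 0 := by
    have : (f - μ • 1) ^ k0 = Matrix.toLinAlgEquiv' ((Ac - μ • 1) ^ k0) := by
      rw [map_pow, map_sub, _root_.map_smul, _root_.map_one]
    have h2 : ((f - μ • 1) ^ k0) w = ((Ac - μ • 1) ^ k0) *ᵥ w := by
      rw [this, Matrix.toLinAlgEquiv'_apply]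
    rw [← h2]
    simpa using hk0
  exact genEig_tendsto hT hμ hvmat

lemma norm_pow_tendsto_zero {A : Matrix (Fin d) (Fin d) ℝ} (hA : IsHurwitz A) {T : ℝ}
    (hT : 0 < T) :
    Tendsto (fun k : ℕ => ‖(exp (T • A)) ^ k‖) atTop (𝓝 0) := by
  set Ac : Matrix (Fin d) (Fin d) ℂ := A.map (algebraMap ℝ ℂ) with hAc
  set Ec : Matrix (Fin d) (Fin d) ℂ := exp (T • Ac) with hEc
  -- the real norm equals the complex norm
  have hmap : ∀ k : ℕ, ((exp (T • A)) ^ k).map (algebraMap ℝ ℂ) = Ec ^ k := by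
    intro k
    set ψ : Matrix (Fin d) (Fin d) ℝ →+* Matrix (Fin d) (Fin d) ℂ :=
      (algebraMap ℝ ℂ).mapMatrix with hψdef
    have hψn : ∀ M : Matrix (Fin d) (Fin d) ℝ, ‖ψ M‖ = ‖M‖ := by
      intro M
      rw [hψdef, RingHom.mapMatrix_apply]
      exact Matrix.frobenius_norm_map_eq M _ fun a => Complex.norm_real a
    have hψ : Continuous ψ := (AddMonoidHomClass.isometry_of_norm ψ hψn).continuous
    have h1 : ((exp (T • A)) ^ k).map (algebraMap ℝ ℂ) = ψ ((exp (T • A)) ^ k) := by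
      rw [hψdef, RingHom.mapMatrix_apply]
    rw [h1, map_pow]
    congr 1
    erw [map_exp ψ hψ (T • A)]
    congr 1
    rw [hψdef, RingHom.mapMatrix_apply]
    ext i j
    simp only [Matrix.map_apply, Matrix.smul_apply, smul_eq_mul, Complex.real_smul,
      Complex.ofReal_mul, hAc]
    simp [Complex.coe_algebraMap]
  have hnormeq : ∀ k : ℕ, ‖(exp (T • A)) ^ k‖ = ‖Ec ^ k‖ := by
    intro k
    rw [← hmap k]
    exact (Matrix.frobenius_norm_map_eq _ _ fun a => Complex.norm_real a).symm
  -- entries of Ec ^ k tend to zero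
  have hentry : ∀ i j : Fin d, Tendsto (fun k : ℕ => (Ec ^ k) i j) atTop (𝓝 0) := by
    intro i j
    have hcol := pow_mulVec_tendsto_zero hA hT (Pi.single j 1)
    have heval : Tendsto (fun k : ℕ => ((Ec ^ k) *ᵥ Pi.single j 1) i) atTop (𝓝 0) := by
      have := ((continuous_apply i).tendsto (0 : Fin d → ℂ)).comp hcol
      exact this
    refine heval.congr fun k => ?_
    rw [Matrix.mulVec_single]
    simp
  -- frobenius norm tends to zero
  have hsum : Tendsto (fun k : ℕ => ∑ i : Fin d, ∑ j : Fin d, ‖(Ec ^ k) i j‖ ^ (2:ℝ))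
      atTop (𝓝 0) := by
    have : ∀ i ∈ Finset.univ, Tendsto (fun k : ℕ => ∑ j : Fin d, ‖(Ec ^ k) i j‖ ^ (2:ℝ))
        atTop (𝓝 0) := by
      intro i _
      have : ∀ j ∈ Finset.univ, Tendsto (fun k : ℕ => ‖(Ec ^ k) i j‖ ^ (2:ℝ))
          atTop (𝓝 0) := by
        intro j _
        have hn : Tendsto (fun k : ℕ => ‖(Ec ^ k) i j‖) atTop (𝓝 0) := by
          simpa using (hentry i j).norm
        have := hn.rpow_const (p := (2:ℝ)) (Or.inr (by norm_num))
        simpa [Real.zero_rpow] using this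
      simpa using tendsto_finset_sum Finset.univ this
    simpa using tendsto_finset_sum Finset.univ this
  have := hsum.rpow_const (p := (1/2 : ℝ)) (Or.inr (by norm_num))
  rw [Real.zero_rpow (by norm_num)] at this
  refine Tendsto.congr (fun k => ?_) this
  rw [← Matrix.frobenius_norm_def (Ec ^ k), hnormeq k]

lemma exists_geom_bound {A : Matrix (Fin d) (Fin d) ℝ} (hA : IsHurwitz A) {T : ℝ}
    (hT : 0 < T) :
    ∃ C r : ℝ, 0 ≤ C ∧ 0 < r ∧ r < 1 ∧
      ∀ k : ℕ, ‖(exp (T • A)) ^ k‖ ≤ C * r ^ k := by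
  set E : Matrix (Fin d) (Fin d) ℝ := exp (T • A) with hE
  have htend := norm_pow_tendsto_zero hA hT
  have hev : ∀ᶠ k : ℕ in atTop, ‖E ^ k‖ < 1/2 := by
    have : Set.Iio (1/2 : ℝ) ∈ 𝓝 (0:ℝ) := Iio_mem_nhds (by norm_num)
    exact htend.eventually_mem this
  rcases eventually_atTop.mp hev with ⟨N₀, hN₀⟩
  set N : ℕ := N₀ + 1 with hN
  have hNpos : 0 < N := Nat.succ_pos _
  have hEN : ‖E ^ N‖ ≤ 1/2 := (hN₀ N (Nat.le_succ _)).le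
  set C₀ : ℝ := ∑ s ∈ Finset.range N, ‖E ^ s‖ with hC₀
  have hC₀nonneg : 0 ≤ C₀ := Finset.sum_nonneg fun _ _ => norm_nonneg _
  have hC₀le : ∀ s, s < N → ‖E ^ s‖ ≤ C₀ := fun s hs =>
    Finset.single_le_sum (f := fun s => ‖E ^ s‖) (fun _ _ => norm_nonneg _)
      (Finset.mem_range.mpr hs)
  set r : ℝ := (1/2 : ℝ) ^ ((N:ℝ)⁻¹) with hr
  have hrpos : 0 < r := Real.rpow_pos_of_pos (by norm_num) _
  have hrlt : r < 1 := Real.rpow_lt_one (by norm_num) (by norm_num)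
    (by positivity)
  refine ⟨2 * C₀, r, by positivity, hrpos, hrlt, fun k => ?_⟩
  -- step 1 : ‖E ^ k‖ ≤ C₀ * (1/2) ^ (k / N)
  have step1 : ‖E ^ k‖ ≤ C₀ * (1/2 : ℝ) ^ (k / N) := by
    have hdm : N * (k / N) + k % N = k := Nat.div_add_mod k N
    have hsplit : E ^ k = (E ^ N) ^ (k / N) * E ^ (k % N) := by
      rw [← pow_mul, ← pow_add, hdm]
    rcases Nat.eq_zero_or_pos (k / N) with hq | hq
    · rw [hq, pow_zero, mul_one]
      have : E ^ k = E ^ (k % N) := by rw [hsplit, hq, pow_zero, one_mul]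
      rw [this]
      exact hC₀le _ (Nat.mod_lt _ hNpos)
    · have h1 : ‖E ^ k‖ ≤ ‖(E ^ N) ^ (k / N)‖ * ‖E ^ (k % N)‖ := by
        rw [hsplit]; exact norm_mul_le _ _
      have h2 : ‖(E ^ N) ^ (k / N)‖ ≤ ‖E ^ N‖ ^ (k / N) := norm_pow_le' _ hq
      have h3 : ‖E ^ N‖ ^ (k / N) ≤ (1/2 : ℝ) ^ (k / N) :=
        pow_le_pow_left₀ (norm_nonneg _) hEN _
      have h4 : ‖E ^ (k % N)‖ ≤ C₀ := hC₀le _ (Nat.mod_lt _ hNpos)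
      calc ‖E ^ k‖ ≤ ‖(E ^ N) ^ (k / N)‖ * ‖E ^ (k % N)‖ := h1
        _ ≤ (1/2 : ℝ) ^ (k / N) * C₀ := by
            refine mul_le_mul (h2.trans h3) h4 (norm_nonneg _) (by positivity)
        _ = C₀ * (1/2 : ℝ) ^ (k / N) := mul_comm _ _
  -- step 2 : (1/2) ^ (k / N) ≤ 2 * r ^ k
  have step2 : ((1/2 : ℝ)) ^ (k / N) ≤ 2 * r ^ k := by
    have hNR : (0:ℝ) < (N:ℝ) := by exact_mod_cast hNpos
    have h5n : k < N * (k / N + 1) := by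
      have hdm := Nat.div_add_mod k N
      have hmod := Nat.mod_lt k hNpos
      nlinarith [hdm, hmod]
    have h5 : (k:ℝ) < (N:ℝ) * (((k / N : ℕ):ℝ) + 1) := by exact_mod_cast h5n
    have hqk : (k:ℝ)/(N:ℝ) - 1 ≤ ((k / N : ℕ):ℝ) := by
      have h6 : (k:ℝ)/(N:ℝ) ≤ ((k / N : ℕ):ℝ) + 1 := by
        rw [div_le_iff₀ hNR]
        nlinarith
      linarith
    have e6 : r ^ k = (1/2:ℝ) ^ ((k:ℝ)/(N:ℝ)) := by
      rw [hr, ← Real.rpow_natCast ((1/2:ℝ) ^ ((N:ℝ)⁻¹)) k, ← Real.rpow_mul (by norm_num)]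
      congr 1
      field_simp
    have e7 : ((1/2:ℝ)) ^ (k / N) = (1/2:ℝ) ^ ((((k / N : ℕ)):ℕ):ℝ) :=
      (Real.rpow_natCast _ _).symm
    rw [e6, e7]
    have e8 : (1/2:ℝ) ^ ((((k / N : ℕ)):ℕ):ℝ) ≤ (1/2:ℝ) ^ ((k:ℝ)/(N:ℝ) - 1) :=
      Real.rpow_le_rpow_of_exponent_ge (by norm_num) (by norm_num) hqk
    have e9 : (1/2:ℝ) ^ ((k:ℝ)/(N:ℝ) - 1) = 2 * (1/2:ℝ) ^ ((k:ℝ)/(N:ℝ)) := by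
      rw [Real.rpow_sub (by norm_num), Real.rpow_one]
      ring
    linarith
  calc ‖E ^ k‖ ≤ C₀ * (1/2 : ℝ) ^ (k / N) := step1
    _ ≤ C₀ * (2 * r ^ k) := by
        exact mul_le_mul_of_nonneg_left step2 hC₀nonneg
    _ = 2 * C₀ * r ^ k := by ring


section Part2

open Filter NormedSpace intervalIntegral
open scoped Topology

variable {d p' : ℕ}

lemma posSemidef_smul' {M : Matrix (Fin d) (Fin d) ℝ} (hM : M.PosSemidef) {c : ℝ} (hc : 0 ≤ c) :
    (c • M).PosSemidef := by
  refine Matrix.PosSemidef.of_dotProduct_mulVec_nonneg ?_ fun x => ?_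
  · rw [Matrix.IsHermitian, Matrix.conjTranspose_smul, hM.1]
    simp
  · rw [star_trivial, Matrix.smul_mulVec, dotProduct_smul, smul_eq_mul]
    exact mul_nonneg hc (by simpa using hM.dotProduct_mulVec_nonneg x)

lemma posDef_smul' {M : Matrix (Fin d) (Fin d) ℝ} (hM : M.PosDef) {c : ℝ} (hc : 0 < c) :
    (c • M).PosDef := by
  refine Matrix.PosDef.of_dotProduct_mulVec_pos ?_ fun x hx => ?_
  · rw [Matrix.IsHermitian, Matrix.conjTranspose_smul, hM.1]
    simp
  · rw [star_trivial, Matrix.smul_mulVec, dotProduct_smul, smul_eq_mul]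
    exact mul_pos hc (by simpa using hM.dotProduct_mulVec_pos hx)

noncomputable def quadCLM (x : Fin d → ℝ) : Matrix (Fin d) (Fin d) ℝ →L[ℝ] ℝ :=
  LinearMap.toContinuousLinearMap
    { toFun := fun M => x ⬝ᵥ M *ᵥ x
      map_add' := fun M N => by
        show x ⬝ᵥ (M + N) *ᵥ x = x ⬝ᵥ M *ᵥ x + x ⬝ᵥ N *ᵥ x
        rw [Matrix.add_mulVec, dotProduct_add]
      map_smul' := fun c M => by
        show x ⬝ᵥ (c • M) *ᵥ x = (RingHom.id ℝ) c • (x ⬝ᵥ M *ᵥ x)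
        rw [Matrix.smul_mulVec, dotProduct_smul]
        rfl }

lemma quadCLM_apply (x : Fin d → ℝ) (M : Matrix (Fin d) (Fin d) ℝ) :
    quadCLM x M = x ⬝ᵥ M *ᵥ x := rfl

noncomputable def transCLM : Matrix (Fin d) (Fin d) ℝ →L[ℝ] Matrix (Fin d) (Fin d) ℝ :=
  LinearMap.toContinuousLinearMap
    { toFun := fun M => Mᵀ
      map_add' := fun M N => Matrix.transpose_add M N
      map_smul' := fun c M => Matrix.transpose_smul c M }

lemma transCLM_apply (M : Matrix (Fin d) (Fin d) ℝ) : transCLM M = Mᵀ := rfl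

lemma intervalIntegral_psd {F : ℝ → Matrix (Fin d) (Fin d) ℝ} (hF : Continuous F)
    (hpsd : ∀ t, (F t).PosSemidef) {a b : ℝ} (hab : a ≤ b) :
    (∫ t in a..b, F t).PosSemidef := by
  have hint := hF.intervalIntegrable (μ := MeasureTheory.volume) a b
  refine Matrix.PosSemidef.of_dotProduct_mulVec_nonneg ?_ fun x => ?_
  · rw [Matrix.IsHermitian, Matrix.conjTranspose_eq_transpose_of_trivial, ← transCLM_apply]
    erw [← ContinuousLinearMap.intervalIntegral_comp_comm transCLM hint]
    refine intervalIntegral.integral_congr fun t _ => ?_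
    erw [transCLM_apply]
    rw [← Matrix.conjTranspose_eq_transpose_of_trivial, (hpsd t).1]
  · rw [star_trivial, ← quadCLM_apply]
    erw [← ContinuousLinearMap.intervalIntegral_comp_comm (quadCLM x) hint]
    refine intervalIntegral.integral_nonneg hab fun t _ => ?_
    erw [quadCLM_apply]
    simpa using (hpsd t).dotProduct_mulVec_nonneg x

lemma exp_smul_transpose (A : Matrix (Fin d) (Fin d) ℝ) (c : ℝ) :
    exp (c • Aᵀ) = (exp (c • A))ᵀ := by
  rw [← Matrix.transpose_smul, Matrix.exp_transpose]

lemma obs_integrand_continuous (A : Matrix (Fin d) (Fin d) ℝ) (C : Matrix (Fin p') (Fin d) ℝ) :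
    Continuous fun t : ℝ => exp (t • Aᵀ) * (Cᵀ * C) * exp (t • A) := by
  have h1 : Continuous fun t : ℝ => exp (t • Aᵀ) :=
    exp_continuous.comp (continuous_id.smul continuous_const)
  have h2 : Continuous fun t : ℝ => exp (t • A) :=
    exp_continuous.comp (continuous_id.smul continuous_const)
  exact (h1.mul continuous_const).mul h2

lemma obs_integrand_psd (A : Matrix (Fin d) (Fin d) ℝ) (C : Matrix (Fin p') (Fin d) ℝ) (t : ℝ) :
    (exp (t • Aᵀ) * (Cᵀ * C) * exp (t • A)).PosSemidef := by
  have h := Matrix.posSemidef_conjTranspose_mul_self (C * exp (t • A))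
  have he : (C * exp (t • A))ᴴ = exp (t • Aᵀ) * Cᵀ := by
    rw [Matrix.conjTranspose_eq_transpose_of_trivial, Matrix.transpose_mul,
      exp_smul_transpose]
  rw [he] at h
  have : exp (t • Aᵀ) * Cᵀ * (C * exp (t • A))
      = exp (t • Aᵀ) * (Cᵀ * C) * exp (t • A) := by
    rw [Matrix.mul_assoc, Matrix.mul_assoc, Matrix.mul_assoc]
  rwa [this] at h

/-- single summand of the controllability Gramian -/
noncomputable def gterm (A : Matrix (Fin d) (Fin d) ℝ) (Q : Matrix (Fin d) (Fin d) ℝ)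
    (T : ℝ) (k : ℕ) : Matrix (Fin d) (Fin d) ℝ :=
  exp (((k : ℝ) * T) • A) * Q * exp (((k : ℝ) * T) • Aᵀ)

lemma gterm_eq_pow (A Q : Matrix (Fin d) (Fin d) ℝ) (T : ℝ) (k : ℕ) :
    gterm A Q T k = (exp (T • A)) ^ k * Q * ((exp (T • A)) ^ k)ᵀ := by
  have h1 : ((k : ℝ) * T) • A = (k : ℕ) • (T • A) := by
    rw [← Nat.cast_smul_eq_nsmul ℝ k (T • A), smul_smul]
  rw [gterm, exp_smul_transpose, h1, Matrix.exp_nsmul]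

lemma gterm_zero (A Q : Matrix (Fin d) (Fin d) ℝ) (T : ℝ) : gterm A Q T 0 = Q := by
  rw [gterm]
  norm_num [exp_zero]

lemma gterm_psd {A Q : Matrix (Fin d) (Fin d) ℝ} (hQ : Q.PosSemidef) (T : ℝ) (k : ℕ) :
    (gterm A Q T k).PosSemidef := by
  have h := hQ.mul_mul_conjTranspose_same (exp (((k : ℝ) * T) • A))
  rwa [Matrix.conjTranspose_eq_transpose_of_trivial, ← exp_smul_transpose] at h

lemma gterm_summable {A : Matrix (Fin d) (Fin d) ℝ} (hA : IsHurwitz A) {T : ℝ} (hT : 0 < T)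
    (Q : Matrix (Fin d) (Fin d) ℝ) : Summable (gterm A Q T) := by
  obtain ⟨Cb, r, hC, hr0, hr1, hb⟩ := exists_geom_bound hA hT
  set E : Matrix (Fin d) (Fin d) ℝ := exp (T • A) with hE
  refine Summable.of_norm_bounded (g := fun k => Cb * Cb * ‖Q‖ * (r * r) ^ k) ?_ ?_
  · exact (summable_geometric_of_lt_one (by positivity) (by nlinarith)).mul_left _
  · intro k
    rw [gterm_eq_pow]
    calc ‖E ^ k * Q * (E ^ k)ᵀ‖ ≤ ‖E ^ k * Q‖ * ‖(E ^ k)ᵀ‖ := norm_mul_le _ _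
      _ ≤ ‖E ^ k‖ * ‖Q‖ * ‖E ^ k‖ := by
          rw [Matrix.frobenius_norm_transpose]
          exact mul_le_mul_of_nonneg_right (norm_mul_le _ _) (norm_nonneg _)
      _ ≤ Cb * Cb * ‖Q‖ * (r * r) ^ k := by
          have hk := hb k
          have h0 : (0:ℝ) ≤ ‖E ^ k‖ := norm_nonneg _
          have h1 : (0:ℝ) ≤ ‖Q‖ := norm_nonneg _
          have h2 : (0:ℝ) ≤ r ^ k := by positivity
          rw [mul_pow]
          nlinarith [mul_le_mul hk hk h0 (by positivity : (0:ℝ) ≤ Cb * r ^ k)]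

lemma summable_quad (x : Fin d → ℝ) {g : ℕ → Matrix (Fin d) (Fin d) ℝ} (hg : Summable g) :
    Summable fun k => quadCLM x (g k) :=
  hg.map (quadCLM x).toLinearMap.toAddMonoidHom (quadCLM x).continuous

lemma tsum_isHermitian {g : ℕ → Matrix (Fin d) (Fin d) ℝ} (hg : Summable g)
    (hh : ∀ k, (g k).IsHermitian) : (∑' k, g k).IsHermitian := by
  rw [Matrix.IsHermitian, Matrix.conjTranspose_eq_transpose_of_trivial, ← transCLM_apply,
    transCLM.map_tsum hg]
  exact tsum_congr fun k => by
    rw [transCLM_apply, ← Matrix.conjTranspose_eq_transpose_of_trivial, hh k]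

lemma ctrl_sub_psd {A : Matrix (Fin d) (Fin d) ℝ} (hA : IsHurwitz A) {T : ℝ} (hT : 0 < T)
    {Q : Matrix (Fin d) (Fin d) ℝ} (hQ : Q.PosSemidef) :
    ((∑' k, gterm A Q T k) - Q).PosSemidef := by
  have hg := gterm_summable hA hT Q
  refine Matrix.PosSemidef.of_dotProduct_mulVec_nonneg ((tsum_isHermitian hg fun k => (gterm_psd hQ T k).1).sub hQ.1) fun x => ?_
  rw [star_trivial, Matrix.sub_mulVec, dotProduct_sub]
  have hmap : x ⬝ᵥ (∑' k, gterm A Q T k) *ᵥ x = ∑' k, quadCLM x (gterm A Q T k) := by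
    rw [← quadCLM_apply, (quadCLM x).map_tsum hg]
  have hq := summable_quad x hg
  rw [hmap, hq.tsum_eq_zero_add]
  have h0 : quadCLM x (gterm A Q T 0) = x ⬝ᵥ Q *ᵥ x := by rw [gterm_zero, quadCLM_apply]
  rw [h0]
  have htail : 0 ≤ ∑' k : ℕ, quadCLM x (gterm A Q T (k + 1)) :=
    tsum_nonneg fun k => by
      rw [quadCLM_apply]
      simpa using (gterm_psd hQ T (k + 1)).dotProduct_mulVec_nonneg x
  linarith

lemma ctrl_psd {A : Matrix (Fin d) (Fin d) ℝ} (hA : IsHurwitz A) {T : ℝ} (hT : 0 < T)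
    {Q : Matrix (Fin d) (Fin d) ℝ} (hQ : Q.PosSemidef) :
    (∑' k, gterm A Q T k).PosSemidef := by
  have hg := gterm_summable hA hT Q
  refine Matrix.PosSemidef.of_dotProduct_mulVec_nonneg (tsum_isHermitian hg fun k => (gterm_psd hQ T k).1) fun x => ?_
  rw [star_trivial, ← quadCLM_apply, (quadCLM x).map_tsum hg]
  exact tsum_nonneg fun k => by
    rw [quadCLM_apply]
    simpa using (gterm_psd hQ T k).dotProduct_mulVec_nonneg x

lemma ctrl_cmp {A : Matrix (Fin d) (Fin d) ℝ} (hA : IsHurwitz A) {T : ℝ} (hT : 0 < T)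
    {h : ℕ} (hh : 0 < h) {Q : Matrix (Fin d) (Fin d) ℝ} (hQ : Q.PosSemidef) :
    ((∑' k, gterm A Q T k) - ∑' k, gterm A Q ((h : ℝ) * T) k).PosSemidef := by
  have hT2 : 0 < (h : ℝ) * T := by positivity
  have hgT := gterm_summable hA hT Q
  have hgT2 := gterm_summable hA hT2 Q
  have hre : ∀ k : ℕ, gterm A Q ((h : ℝ) * T) k = gterm A Q T (h * k) := by
    intro k
    have hc : (k : ℝ) * ((h : ℝ) * T) = ((h * k : ℕ) : ℝ) * T := by push_cast; ring
    rw [gterm, gterm, hc]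
  have hgT2' : Summable fun k => gterm A Q T (h * k) := by
    refine hgT2.congr fun k => hre k
  refine Matrix.PosSemidef.of_dotProduct_mulVec_nonneg ((tsum_isHermitian hgT fun k => (gterm_psd hQ T k).1).sub
    (tsum_isHermitian hgT2 fun k => (gterm_psd hQ _ k).1)) fun x => ?_
  rw [star_trivial, Matrix.sub_mulVec, dotProduct_sub]
  have hmap1 : x ⬝ᵥ (∑' k, gterm A Q T k) *ᵥ x = ∑' k, quadCLM x (gterm A Q T k) := by
    rw [← quadCLM_apply, (quadCLM x).map_tsum hgT]
  have hmap2 : x ⬝ᵥ (∑' k, gterm A Q ((h : ℝ) * T) k) *ᵥ x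
      = ∑' k, quadCLM x (gterm A Q T (h * k)) := by
    rw [← quadCLM_apply, (quadCLM x).map_tsum hgT2]
    exact tsum_congr fun k => by rw [hre k]
  rw [hmap1, hmap2, sub_nonneg]
  refine Summable.tsum_le_tsum_of_inj (fun k => h * k)
    (fun a b hab => by
      have := Nat.eq_of_mul_eq_mul_left hh hab
      exact this)
    (fun c _ => by
      rw [quadCLM_apply]
      simpa using (gterm_psd hQ T c).dotProduct_mulVec_nonneg x)
    (fun k => le_rfl)
    (summable_quad x hgT2') (summable_quad x hgT)

end Part2

end Stmt5Aux


/-- Monotonicity of `f_{T,σ²}` w.r.t. the transmission window: if `(A,C)` is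
observable over `[0,T₁]`, `T₂ = h·T₁` with `h` a positive integer, then
`f_{T₂,σ²}(Σ) ≥ f_{T₁,σ²}(Σ)`. -/
theorem stmt5 {n m p : ℕ} (A : Matrix (Fin n) (Fin n) ℝ) (B : Matrix (Fin n) (Fin m) ℝ)
    (C : Matrix (Fin p) (Fin n) ℝ) (hA : IsHurwitz A) (σ2 : ℝ) (hσ : 0 < σ2)
    (T₁ : ℝ) (hT₁ : 0 < T₁) (h : ℕ) (hh : 0 < h)
    (hobs : (obsGram A C T₁).PosDef)
    (S : Matrix (Fin m) (Fin m) ℝ) (hS : S.PosSemidef) :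
    infoFun A B C T₁ σ2 S ≤ infoFun A B C ((h : ℝ) * T₁) σ2 S := by
  classical
  set T₂ : ℝ := (h : ℝ) * T₁ with hT₂def
  have hT₂ : 0 < T₂ := by
    have : (1:ℝ) ≤ (h:ℝ) := by exact_mod_cast hh
    nlinarith
  have hT₁₂ : T₁ ≤ T₂ := by
    have : (1:ℝ) ≤ (h:ℝ) := by exact_mod_cast hh
    nlinarith
  set Q : Matrix (Fin n) (Fin n) ℝ := B * S * Bᵀ with hQdef
  have hQ : Q.PosSemidef := by
    have := hS.mul_mul_conjTranspose_same B
    rwa [Matrix.conjTranspose_eq_transpose_of_trivial] at this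
  -- ctrlGram = tsum of gterm
  have hctrl : ∀ T : ℝ, ctrlGram A B T S = ∑' k, Stmt5Aux.gterm A Q T k := by
    intro T
    rw [ctrlGram]
    exact tsum_congr fun k => by rw [Stmt5Aux.gterm]
  set W₁ : Matrix (Fin n) (Fin n) ℝ := ctrlGram A B T₁ S with hW₁def
  set W₂ : Matrix (Fin n) (Fin n) ℝ := ctrlGram A B T₂ S with hW₂def
  have hW₁Q : (W₁ - Q).PosSemidef := by
    rw [hW₁def, hctrl T₁]; exact Stmt5Aux.ctrl_sub_psd hA hT₁ hQ
  have hW₂Q : (W₂ - Q).PosSemidef := by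
    rw [hW₂def, hctrl T₂]; exact Stmt5Aux.ctrl_sub_psd hA hT₂ hQ
  have hW₁₂ : (W₁ - W₂).PosSemidef := by
    rw [hW₁def, hW₂def, hctrl T₁, hctrl T₂, hT₂def]
    exact Stmt5Aux.ctrl_cmp hA hT₁ hh hQ
  -- observability Gramians
  set O₁ : Matrix (Fin n) (Fin n) ℝ := obsGram A C T₁ with hO₁def
  set O₂ : Matrix (Fin n) (Fin n) ℝ := obsGram A C T₂ with hO₂def
  have hOdiff : (O₂ - O₁).PosSemidef := by
    have hint1 :=
      (Stmt5Aux.obs_integrand_continuous A C).intervalIntegrable (μ := MeasureTheory.volume) 0 T₁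
    have hint2 :=
      (Stmt5Aux.obs_integrand_continuous A C).intervalIntegrable (μ := MeasureTheory.volume) T₁ T₂
    have hadd := intervalIntegral.integral_add_adjacent_intervals hint1 hint2
    have hdiff : O₂ - O₁ = ∫ t in T₁..T₂,
        NormedSpace.exp (t • Aᵀ) * (Cᵀ * C) * NormedSpace.exp (t • A) := by
      rw [hO₂def, hO₁def, obsGram, obsGram, ← hadd]
      abel
    rw [hdiff]
    exact Stmt5Aux.intervalIntegral_psd (Stmt5Aux.obs_integrand_continuous A C)
      (Stmt5Aux.obs_integrand_psd A C) hT₁₂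
  have hO₂pd : O₂.PosDef := by
    have := hobs.add_posSemidef hOdiff
    rwa [add_sub_cancel] at this
  -- the key matrices
  set K₁ : Matrix (Fin n) (Fin n) ℝ := σ2 • O₁⁻¹ + (W₁ - Q) with hK₁def
  set K₂ : Matrix (Fin n) (Fin n) ℝ := σ2 • O₂⁻¹ + (W₂ - Q) with hK₂def
  have hK₁ : K₁.PosDef := (Stmt5Aux.posDef_smul' hobs.inv hσ).add_posSemidef hW₁Q
  have hK₂ : K₂.PosDef := (Stmt5Aux.posDef_smul' hO₂pd.inv hσ).add_posSemidef hW₂Q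
  have hK₁₂ : (K₁ - K₂).PosSemidef := by
    have hinv : (O₁⁻¹ - O₂⁻¹).PosSemidef := Stmt5Aux.inv_antitone hobs hO₂pd hOdiff
    have h1 : (σ2 • (O₁⁻¹ - O₂⁻¹)).PosSemidef := Stmt5Aux.posSemidef_smul' hinv hσ.le
    have h2 := h1.add hW₁₂
    have : σ2 • (O₁⁻¹ - O₂⁻¹) + (W₁ - W₂) = K₁ - K₂ := by
      rw [hK₁def, hK₂def, smul_sub]
      abel
    rwa [this] at h2
  -- determinant identities
  have det_shift : ∀ (O M : Matrix (Fin n) (Fin n) ℝ), O.PosDef →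
      (σ2 • (1 : Matrix (Fin n) (Fin n) ℝ) + O * M).det = O.det * (σ2 • O⁻¹ + M).det := by
    intro O M hO
    have hOunit : IsUnit O.det := isUnit_iff_ne_zero.2 hO.det_pos.ne'
    have hfac : σ2 • (1 : Matrix (Fin n) (Fin n) ℝ) + O * M = O * (σ2 • O⁻¹ + M) := by
      rw [Matrix.mul_add, Matrix.mul_smul, Matrix.mul_nonsing_inv _ hOunit]
    rw [hfac, det_mul]
  have hKQ : ∀ (Oi Wi : Matrix (Fin n) (Fin n) ℝ),
      σ2 • Oi⁻¹ + Wi = (σ2 • Oi⁻¹ + (Wi - Q)) + Q := by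
    intro Oi Wi
    abel
  -- rewrite infoFun
  have hinfo : ∀ (T : ℝ) (O W K : Matrix (Fin n) (Fin n) ℝ), obsGram A C T = O →
      ctrlGram A B T S = W → O.PosDef → K = σ2 • O⁻¹ + (W - Q) →
      infoFun A B C T σ2 S = (1/2) * Real.logb 2 ((K + Q).det / K.det) := by
    intro T O W K hO hW hOpd hK
    rw [infoFun, hO, hW, ← hQdef, det_shift O W hOpd, det_shift O (W - Q) hOpd]
    congr 2
    rw [mul_div_mul_left _ _ hOpd.det_pos.ne', hK, ← hKQ O W]
  have h1 : infoFun A B C T₁ σ2 S = (1/2) * Real.logb 2 ((K₁ + Q).det / K₁.det) :=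
    hinfo T₁ O₁ W₁ K₁ rfl rfl hobs rfl
  have h2 : infoFun A B C T₂ σ2 S = (1/2) * Real.logb 2 ((K₂ + Q).det / K₂.det) :=
    hinfo T₂ O₂ W₂ K₂ rfl rfl hO₂pd rfl
  rw [h1, h2]
  have hratio := Stmt5Aux.ratio_mono hK₁ hK₂ hQ hK₁₂
  have hpos1 : 0 < (K₁ + Q).det / K₁.det :=
    div_pos (hK₁.add_posSemidef hQ).det_pos hK₁.det_pos
  have hlog := Real.logb_le_logb_of_le (b := 2) (by norm_num) hpos1 hratio
  linarith
end

section
/- For every fixed positive semidefinite Σ ∈ ℝ^{m×m} and fixed σ² > 0, as T → ∞ the value f_{T,σ²}(Σ) converges to (1/2)·log₂ det( I + (1/σ²)·O_∞·BΣBᵀ ), where O_∞ := ∫₀^∞ exp(Aᵀt) CᵀC exp(At) dt is the (finite, since A is Hurwitz) infinite-horizon observability Gramian. -/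
open Matrix MeasureTheory
open scoped Matrix

attribute [local instance] Matrix.frobeniusNormedAddCommGroup Matrix.frobeniusNormedSpace

set_option maxHeartbeats 1600000

section AuxProofs

attribute [local instance] Matrix.frobeniusNormedRing Matrix.frobeniusNormedAlgebra

open NormedSpace
open scoped ENNReal NNReal

lemma eig_of_mem_spectrum {N : ℕ} (M : Matrix (Fin N) (Fin N) ℂ) {μ : ℂ}
    (hμ : μ ∈ spectrum ℂ M) : ∃ v : Fin N → ℂ, v ≠ 0 ∧ M *ᵥ v = μ • v := by
  rw [spectrum.mem_iff] at hμ
  rw [Matrix.isUnit_iff_isUnit_det, isUnit_iff_ne_zero, not_not] at hμ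
  obtain ⟨v, hv0, hv⟩ := (Matrix.exists_mulVec_eq_zero_iff).2 hμ
  refine ⟨v, hv0, ?_⟩
  rw [Matrix.sub_mulVec, sub_eq_zero, Algebra.algebraMap_eq_smul_one,
    Matrix.smul_mulVec, Matrix.one_mulVec] at hv
  exact hv.symm

lemma mem_spectrum_of_eig {N : ℕ} (M : Matrix (Fin N) (Fin N) ℂ) {μ : ℂ} {v : Fin N → ℂ}
    (hv0 : v ≠ 0) (hv : M *ᵥ v = μ • v) : μ ∈ spectrum ℂ M := by
  rw [spectrum.mem_iff, Matrix.isUnit_iff_isUnit_det, isUnit_iff_ne_zero, not_not]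
  rw [← Matrix.exists_mulVec_eq_zero_iff]
  refine ⟨v, hv0, ?_⟩
  rw [Matrix.sub_mulVec, Algebra.algebraMap_eq_smul_one, Matrix.smul_mulVec,
    Matrix.one_mulVec, hv, sub_self]

lemma spectrum_exp {N : ℕ} (M : Matrix (Fin N) (Fin N) ℂ) {μ : ℂ}
    (hμ : μ ∈ spectrum ℂ (exp M)) : ∃ c ∈ spectrum ℂ M, Complex.exp c = μ := by
  classical
  obtain ⟨v, hv0, hv⟩ := eig_of_mem_spectrum _ hμ
  set E := exp M with hE
  -- the kernel W of (E - μ • 1)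
  set W : Submodule ℂ (Fin N → ℂ) := LinearMap.ker (Matrix.mulVecLin (E - μ • 1)) with hWdef
  have hmemW : ∀ x : Fin N → ℂ, x ∈ W ↔ E *ᵥ x = μ • x := by
    intro x
    rw [hWdef, LinearMap.mem_ker, Matrix.mulVecLin_apply, Matrix.sub_mulVec, sub_eq_zero,
      Matrix.smul_mulVec, Matrix.one_mulVec]
  have hvW : v ∈ W := (hmemW v).2 hv
  have hcomm : M * E = E * M := ((Commute.refl M).exp_right).eq
  have hinv : ∀ x ∈ W, M.mulVecLin x ∈ W := by
    intro x hx
    rw [hmemW] at hx ⊢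
    rw [Matrix.mulVecLin_apply, Matrix.mulVec_mulVec, ← hcomm, ← Matrix.mulVec_mulVec, hx,
      Matrix.mulVec_smul]
  set f' : Module.End ℂ W := (Matrix.mulVecLin M).restrict hinv with hf'
  have : Nontrivial W := Submodule.nontrivial_iff_ne_bot.mpr (by
    intro h
    rw [h] at hvW
    exact hv0 (by simpa using hvW))
  obtain ⟨c, hc⟩ := Module.End.exists_eigenvalue f'
  obtain ⟨w, hw⟩ := hc.exists_hasEigenvector
  have hw0 : (w : Fin N → ℂ) ≠ 0 := fun h => hw.2 (by simpa using h)
  have hMw : M *ᵥ (w : Fin N → ℂ) = c • (w : Fin N → ℂ) := by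
    have h2 := congrArg (Subtype.val) hw.apply_eq_smul
    exact h2
  refine ⟨c, mem_spectrum_of_eig M hw0 hMw, ?_⟩
  -- now show exp c is the eigenvalue μ
  have hpow : ∀ k : ℕ, M ^ k *ᵥ (w : Fin N → ℂ) = c ^ k • (w : Fin N → ℂ) := by
    intro k
    induction k with
    | zero => simp [Matrix.one_mulVec]
    | succ k ih =>
      rw [pow_succ', pow_succ', ← Matrix.mulVec_mulVec, ih, Matrix.mulVec_smul, hMw,
        smul_smul, mul_comm c (c ^ k)]
  -- mulVec by w as a CLM in the matrix argument
  let φ : Matrix (Fin N) (Fin N) ℂ →L[ℂ] (Fin N → ℂ) :=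
    LinearMap.toContinuousLinearMap
      { toFun := fun X => X *ᵥ (w : Fin N → ℂ)
        map_add' := fun X Y => Matrix.add_mulVec X Y _
        map_smul' := fun a X => Matrix.smul_mulVec a X _ }
  have hsum : Summable fun k : ℕ => ((k.factorial : ℂ)⁻¹) • M ^ k := expSeries_summable' (𝕂 := ℂ) M
  have hφE : φ E = ∑' k : ℕ, ((k.factorial : ℂ)⁻¹) • (c ^ k • (w : Fin N → ℂ)) := by
    rw [hE, exp_eq_tsum ℂ]
    rw [φ.map_tsum hsum]
    refine tsum_congr fun k => ?_
    rw [φ.map_smul]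
    have hφ : φ (M ^ k) = M ^ k *ᵥ (w : Fin N → ℂ) := rfl
    rw [hφ, hpow]
  have hsum2 : Summable fun k : ℕ => ((k.factorial : ℂ)⁻¹) * c ^ k := by
    simpa using expSeries_summable' (𝕂 := ℂ) (𝔸 := ℂ) c
  have hφE2 : φ E = Complex.exp c • (w : Fin N → ℂ) := by
    rw [hφE]
    have : ∀ k : ℕ, ((k.factorial : ℂ)⁻¹) • (c ^ k • (w : Fin N → ℂ))
        = (((k.factorial : ℂ)⁻¹) * c ^ k) • (w : Fin N → ℂ) := fun k => by rw [smul_smul]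
    simp_rw [this]
    rw [hsum2.tsum_smul_const]
    congr 1
    rw [Complex.exp_eq_exp_ℂ, exp_eq_tsum ℂ]
    simp [smul_eq_mul]
  have hφE3 : φ E = μ • (w : Fin N → ℂ) := by
    show E *ᵥ (w : Fin N → ℂ) = μ • (w : Fin N → ℂ)
    exact (hmemW _).1 w.2
  have := hφE2.symm.trans hφE3
  have h5 : (Complex.exp c - μ) • (w : Fin N → ℂ) = 0 := by
    rw [sub_smul, this, sub_self]
  rcases smul_eq_zero.1 h5 with h | h
  · exact sub_eq_zero.1 h
  · exact absurd h hw0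

lemma hurwitz_transpose {n : ℕ} {A : Matrix (Fin n) (Fin n) ℝ} (hA : IsHurwitz A) :
    IsHurwitz Aᵀ := by
  intro μ hμ
  apply hA μ
  rw [spectrum.mem_iff] at hμ ⊢
  intro hU
  apply hμ
  rw [Matrix.isUnit_iff_isUnit_det] at hU ⊢
  have : (algebraMap ℂ (Matrix (Fin n) (Fin n) ℂ)) μ - Aᵀ.map (algebraMap ℝ ℂ)
      = ((algebraMap ℂ (Matrix (Fin n) (Fin n) ℂ)) μ - A.map (algebraMap ℝ ℂ))ᵀ := by
    rw [Matrix.transpose_sub, ← Matrix.transpose_map]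
    congr 1
    rw [Algebra.algebraMap_eq_smul_one, Matrix.transpose_smul, Matrix.transpose_one]
  rw [this, Matrix.det_transpose]
  exact hU

lemma map_exp_algebraMap {n : ℕ} (A : Matrix (Fin n) (Fin n) ℝ) :
    (exp A).map (algebraMap ℝ ℂ) = exp (A.map (algebraMap ℝ ℂ)) := by
  have hc : Continuous ((algebraMap ℝ ℂ).mapMatrix : Matrix (Fin n) (Fin n) ℝ →+* Matrix (Fin n) (Fin n) ℂ) := by
    show Continuous (fun M : Matrix (Fin n) (Fin n) ℝ => M.map (algebraMap ℝ ℂ))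
    exact continuous_matrix fun i j => Complex.continuous_ofReal.comp ((continuous_apply j).comp (continuous_apply i))
  have h2 := map_exp (𝔸 := Matrix (Fin n) (Fin n) ℝ) (𝔹 := Matrix (Fin n) (Fin n) ℂ)
    ((algebraMap ℝ ℂ).mapMatrix) hc A
  exact h2

lemma norm_map_complex {n : ℕ} (X : Matrix (Fin n) (Fin n) ℝ) :
    ‖X.map (algebraMap ℝ ℂ)‖ = ‖X‖ :=
  Matrix.frobenius_norm_map_eq X _ (fun a => Complex.norm_real a)

lemma hurwitz_decay {n : ℕ} (A : Matrix (Fin n) (Fin n) ℝ) (hA : IsHurwitz A) :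
    ∃ M c : ℝ, 0 < M ∧ 0 < c ∧ ∀ t : ℝ, 0 ≤ t →
      ‖exp (t • A)‖ ≤ M * Real.exp (-(c * t)) := by
  rcases Nat.eq_zero_or_pos n with hn | hn
  · refine ⟨1, 1, one_pos, one_pos, fun t ht => ?_⟩
    subst hn
    have : exp (t • A) = 0 := Subsingleton.elim _ _
    rw [this, norm_zero]
    positivity
  -- complexification
  set Mℂ := A.map (algebraMap ℝ ℂ) with hMℂ
  set E := exp Mℂ with hE
  haveI : Nontrivial (Matrix (Fin n) (Fin n) ℂ) := by
    refine ⟨0, 1, fun h => ?_⟩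
    have := congrFun (congrFun h ⟨0, hn⟩) ⟨0, hn⟩
    simp [Matrix.one_apply] at this
  have hne : (spectrum ℂ E).Nonempty := spectrum.nonempty E
  have hρ : spectralRadius ℂ E < 1 := by
    refine lt_of_lt_of_le (spectrum.spectralRadius_lt_of_forall_lt_of_nonempty hne
      (r := 1) ?_) (by norm_num)
    intro μ hμ
    obtain ⟨d, hds, hde⟩ := spectrum_exp Mℂ hμ
    have hd := hA d hds
    have : ‖μ‖ < 1 := by
      rw [← hde]
      calc ‖Complex.exp d‖ = Real.exp d.re := Complex.norm_exp d
      _ < 1 := Real.exp_lt_one_iff.mpr hd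
    exact_mod_cast this
  -- choose r strictly between spectral radius and 1
  obtain ⟨x, hx1, hx2⟩ := exists_between (max_lt hρ (by norm_num : (2⁻¹ : ℝ≥0∞) < 1))
  have hxρ : spectralRadius ℂ E < x := lt_of_le_of_lt (le_max_left _ _) hx1
  have hxhalf : (2⁻¹ : ℝ≥0∞) < x := lt_of_le_of_lt (le_max_right _ _) hx1
  have hxtop : x ≠ ⊤ := ne_top_of_lt hx2
  set r : ℝ := x.toReal with hr
  have hx0 : x ≠ 0 := by
    intro h
    rw [h] at hxhalf
    simp at hxhalf
  have hr0 : 0 < r := ENNReal.toReal_pos hx0 hxtop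
  have hr1 : r < 1 := by
    have := (ENNReal.toReal_lt_toReal hxtop (by norm_num : (1:ℝ≥0∞) ≠ ⊤)).2 hx2
    simpa using this
  have hgelf := spectrum.pow_nnnorm_pow_one_div_tendsto_nhds_spectralRadius E
  have hev : ∀ᶠ k : ℕ in Filter.atTop, (‖E ^ k‖₊ : ℝ≥0∞) ^ (1/(k:ℝ)) < x :=
    hgelf.eventually_lt_const hxρ
  obtain ⟨K, hK⟩ := Filter.eventually_atTop.1 (hev.and (Filter.eventually_ge_atTop 1))
  have hEk : ∀ k, K ≤ k → ‖E ^ k‖ ≤ r ^ k := by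
    intro k hk
    obtain ⟨h1, h2⟩ := hK k hk
    have hkne : (k:ℝ) ≠ 0 := Nat.cast_ne_zero.2 (by omega)
    have h3 : (‖E ^ k‖₊ : ℝ≥0∞) ≤ x ^ (k:ℝ) := by
      have h4 := ENNReal.rpow_le_rpow h1.le (by positivity : (0:ℝ) ≤ (k:ℝ))
      rwa [← ENNReal.rpow_mul, one_div, inv_mul_cancel₀ hkne, ENNReal.rpow_one] at h4
    have h5 := ENNReal.toReal_mono (ENNReal.rpow_ne_top_of_nonneg (by positivity) hxtop) h3
    rw [ENNReal.coe_toReal, coe_nnnorm] at h5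
    calc ‖E ^ k‖ ≤ (x ^ (k:ℝ)).toReal := h5
    _ = r ^ k := by rw [← ENNReal.toReal_rpow, Real.rpow_natCast]
  have hnorm_pow : ∀ k : ℕ, ‖(exp A) ^ k‖ = ‖E ^ k‖ := by
    intro k
    rw [← norm_map_complex ((exp A) ^ k)]
    congr 1
    have h6 : ((exp A) ^ k).map (algebraMap ℝ ℂ)
        = ((exp A).map (algebraMap ℝ ℂ)) ^ k :=
      map_pow ((algebraMap ℝ ℂ).mapMatrix : Matrix (Fin n) (Fin n) ℝ →+* Matrix (Fin n) (Fin n) ℂ) _ k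
    rw [h6, map_exp_algebraMap]
  have hcont : Continuous (fun t : ℝ => exp (t • A)) :=
    exp_continuous.comp (continuous_id.smul continuous_const)
  obtain ⟨C, hC⟩ := (isCompact_Icc (a := (0:ℝ)) (b := (K+1:ℝ))).exists_bound_of_continuousOn
    hcont.continuousOn
  set C' : ℝ := max C 1 with hC'
  have hC'1 : 1 ≤ C' := le_max_right _ _
  have hC'0 : 0 < C' := lt_of_lt_of_le one_pos hC'1
  have hCb : ∀ s : ℝ, 0 ≤ s → s ≤ K+1 → ‖exp (s • A)‖ ≤ C' :=
    fun s h1 h2 => le_trans (hC s ⟨h1, h2⟩) (le_max_left _ _)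
  set c : ℝ := -Real.log r with hc
  have hc0 : 0 < c := by
    rw [hc, neg_pos]
    exact Real.log_neg hr0 hr1
  refine ⟨C' * Real.exp (c * (K+1)), c, by positivity, hc0, fun t ht => ?_⟩
  rcases le_total t (K+1) with h | h
  · calc ‖exp (t • A)‖ ≤ C' := hCb t ht h
    _ = C' * 1 := (mul_one C').symm
    _ ≤ C' * Real.exp (c * (K+1) + -(c * t)) := by
      apply mul_le_mul_of_nonneg_left _ hC'0.le
      apply Real.one_le_exp
      nlinarith [hc0]
    _ = C' * Real.exp (c * (K+1)) * Real.exp (-(c * t)) := by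
      rw [mul_assoc, ← Real.exp_add]
  · set k : ℕ := ⌊t⌋₊ with hk
    have htpos : (0:ℝ) ≤ t := le_trans (by positivity) h
    have hkK : K + 1 ≤ k := by
      have := Nat.floor_le_floor (R := ℝ) h
      rwa [← Nat.cast_add_one, Nat.floor_natCast] at this
    have hkle : (k:ℝ) ≤ t := Nat.floor_le htpos
    have hklt : t < k + 1 := Nat.lt_floor_add_one t
    have hsplit : exp (t • A) = exp ((k:ℝ) • A) * exp ((t - k) • A) := by
      rw [← Matrix.exp_add_of_commute _ _ (((Commute.refl A).smul_left _).smul_right _)]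
      congr 1
      rw [← add_smul]
      congr 1
      ring
    have h7 : ‖exp ((k:ℝ) • A)‖ ≤ r ^ k := by
      rw [Nat.cast_smul_eq_nsmul, Matrix.exp_nsmul, hnorm_pow]
      exact hEk k (by omega)
    have h8 : ‖exp ((t - k) • A)‖ ≤ C' := by
      apply hCb _ (by linarith) (by have := Nat.cast_nonneg (α := ℝ) K; linarith)
    calc ‖exp (t • A)‖ ≤ ‖exp ((k:ℝ) • A)‖ * ‖exp ((t - k) • A)‖ := by
          rw [hsplit]; exact norm_mul_le _ _
    _ ≤ r ^ k * C' := mul_le_mul h7 h8 (norm_nonneg _) (by positivity)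
    _ ≤ C' * Real.exp (c * (K+1)) * Real.exp (-(c * t)) := by
        have h9 : r ^ k = Real.exp (-(c * k)) := by
          have h10 : -(c * k) = (k:ℝ) * Real.log r := by rw [hc]; ring
          rw [h10, Real.exp_nat_mul, Real.exp_log hr0]
        rw [h9, mul_comm _ C', mul_assoc, ← Real.exp_add]
        apply mul_le_mul_of_nonneg_left _ hC'0.le
        apply Real.exp_le_exp.2
        nlinarith [hc0, hklt, Nat.cast_nonneg (α := ℝ) K]

@[reducible] noncomputable def matCENorm {k : ℕ} : ContinuousENorm (Matrix (Fin k) (Fin k) ℝ) :=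
  SeminormedAddGroup.toContinuousENorm

@[reducible] noncomputable def matPMS {k : ℕ} :
    TopologicalSpace.PseudoMetrizableSpace (Matrix (Fin k) (Fin k) ℝ) :=
  inferInstanceAs (TopologicalSpace.PseudoMetrizableSpace (Fin k → Fin k → ℝ))

attribute [local instance] matCENorm matPMS

section Analysis

variable {n m p : ℕ}

lemma exp_smul_continuous (A : Matrix (Fin n) (Fin n) ℝ) :
    Continuous (fun t : ℝ => exp (t • A)) :=
  exp_continuous.comp (continuous_id.smul continuous_const)

lemma obs_integrand_integrable (A : Matrix (Fin n) (Fin n) ℝ) (C : Matrix (Fin p) (Fin n) ℝ)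
    (hA : IsHurwitz A) :
    IntegrableOn (fun t : ℝ => exp (t • Aᵀ) * (Cᵀ * C) * exp (t • A)) (Set.Ioi 0) := by
  obtain ⟨M1, c1, hM1, hc1, h1⟩ := hurwitz_decay A hA
  obtain ⟨M2, c2, hM2, hc2, h2⟩ := hurwitz_decay Aᵀ (hurwitz_transpose hA)
  have hcont : Continuous (fun t : ℝ => exp (t • Aᵀ) * (Cᵀ * C) * exp (t • A)) :=
    ((exp_smul_continuous Aᵀ).mul continuous_const).mul (exp_smul_continuous A)
  refine ((exp_neg_integrableOn_Ioi 0 (show (0:ℝ) < c2 + c1 by linarith)).const_mul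
    (M2 * ‖Cᵀ * C‖ * M1)).mono' hcont.aestronglyMeasurable ?_
  filter_upwards [ae_restrict_mem measurableSet_Ioi] with t ht
  have ht0 : (0:ℝ) ≤ t := le_of_lt ht
  have hab : Real.exp (-(c2 * t)) * Real.exp (-(c1 * t)) = Real.exp (-(c2 + c1) * t) := by
    rw [← Real.exp_add]
    ring_nf
  calc ‖exp (t • Aᵀ) * (Cᵀ * C) * exp (t • A)‖
      ≤ ‖exp (t • Aᵀ) * (Cᵀ * C)‖ * ‖exp (t • A)‖ := norm_mul_le _ _
  _ ≤ (‖exp (t • Aᵀ)‖ * ‖Cᵀ * C‖) * ‖exp (t • A)‖ :=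
      mul_le_mul_of_nonneg_right (norm_mul_le _ _) (norm_nonneg _)
  _ ≤ ((M2 * Real.exp (-(c2 * t))) * ‖Cᵀ * C‖) * (M1 * Real.exp (-(c1 * t))) := by
      apply mul_le_mul
      · exact mul_le_mul_of_nonneg_right (h2 t ht0) (norm_nonneg _)
      · exact h1 t ht0
      · exact norm_nonneg _
      · positivity
  _ = M2 * ‖Cᵀ * C‖ * M1 * Real.exp (-(c2 + c1) * t) := by
      rw [← hab]; ring

lemma obs_tendsto (A : Matrix (Fin n) (Fin n) ℝ) (C : Matrix (Fin p) (Fin n) ℝ)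
    (hA : IsHurwitz A) :
    Filter.Tendsto (fun T : ℝ => obsGram A C T) Filter.atTop
      (nhds (∫ t in Set.Ioi (0:ℝ), exp (t • Aᵀ) * (Cᵀ * C) * exp (t • A))) :=
  intervalIntegral_tendsto_integral_Ioi 0 (obs_integrand_integrable A C hA) Filter.tendsto_id

lemma psd_smul {M : Matrix (Fin n) (Fin n) ℝ} {c : ℝ} (hc : 0 ≤ c) (h : M.PosSemidef) :
    (c • M).PosSemidef := by
  refine Matrix.PosSemidef.of_dotProduct_mulVec_nonneg ?_ fun x => ?_
  · rw [Matrix.IsHermitian, Matrix.conjTranspose_smul, star_trivial, h.1]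
  · rw [Matrix.smul_mulVec, dotProduct_smul, smul_eq_mul]
    exact mul_nonneg hc (h.dotProduct_mulVec_nonneg x)

lemma obs_psd (A : Matrix (Fin n) (Fin n) ℝ) (C : Matrix (Fin p) (Fin n) ℝ)
    (hA : IsHurwitz A) :
    (∫ t in Set.Ioi (0:ℝ), exp (t • Aᵀ) * (Cᵀ * C) * exp (t • A)).PosSemidef := by
  have hint := obs_integrand_integrable A C hA
  have hfact : ∀ t : ℝ, exp (t • Aᵀ) * (Cᵀ * C) * exp (t • A)
      = (C * exp (t • A))ᵀ * (C * exp (t • A)) := by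
    intro t
    have he : exp (t • Aᵀ) = (exp (t • A))ᵀ := by
      rw [← Matrix.exp_transpose, Matrix.transpose_smul]
    rw [Matrix.transpose_mul, he, Matrix.mul_assoc, Matrix.mul_assoc, Matrix.mul_assoc]
  have hsym : ∀ t : ℝ, (exp (t • Aᵀ) * (Cᵀ * C) * exp (t • A))ᵀ
      = exp (t • Aᵀ) * (Cᵀ * C) * exp (t • A) := by
    intro t
    rw [hfact, Matrix.transpose_mul, Matrix.transpose_transpose, ← hfact]
  refine Matrix.PosSemidef.of_dotProduct_mulVec_nonneg ?_ fun x => ?_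
  · -- Hermitian
    rw [Matrix.IsHermitian, Matrix.conjTranspose_eq_transpose_of_trivial]
    let φ : Matrix (Fin n) (Fin n) ℝ →L[ℝ] Matrix (Fin n) (Fin n) ℝ :=
      LinearMap.toContinuousLinearMap
        { toFun := fun M => Mᵀ
          map_add' := fun M N => Matrix.transpose_add M N
          map_smul' := fun c M => Matrix.transpose_smul c M }
    have hφ := φ.integral_comp_comm hint
    have : (∫ t in Set.Ioi (0:ℝ), exp (t • Aᵀ) * (Cᵀ * C) * exp (t • A))ᵀ
        = ∫ t in Set.Ioi (0:ℝ), (exp (t • Aᵀ) * (Cᵀ * C) * exp (t • A))ᵀ := hφ.symm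
    rw [this]
    congr 1
    ext t : 1
    rw [hsym]
  · rw [star_trivial]
    let φ : Matrix (Fin n) (Fin n) ℝ →L[ℝ] ℝ :=
      LinearMap.toContinuousLinearMap
        { toFun := fun M => x ⬝ᵥ (M *ᵥ x)
          map_add' := fun M N => by simp [Matrix.add_mulVec, dotProduct_add]
          map_smul' := fun c M => by simp [Matrix.smul_mulVec, dotProduct_smul] }
    have hφ := φ.integral_comp_comm hint
    have hval : x ⬝ᵥ ((∫ t in Set.Ioi (0:ℝ), exp (t • Aᵀ) * (Cᵀ * C) * exp (t • A)) *ᵥ x)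
        = ∫ t in Set.Ioi (0:ℝ), x ⬝ᵥ ((exp (t • Aᵀ) * (Cᵀ * C) * exp (t • A)) *ᵥ x) :=
      hφ.symm
    rw [hval]
    apply integral_nonneg
    intro t
    show (0:ℝ) ≤ x ⬝ᵥ ((exp (t • Aᵀ) * (Cᵀ * C) * exp (t • A)) *ᵥ x)
    rw [hfact, ← Matrix.mulVec_mulVec, Matrix.dotProduct_mulVec, Matrix.vecMul_transpose]
    exact Finset.sum_nonneg fun i _ => mul_self_nonneg _

end Analysis

section Analysis2

variable {n m p : ℕ}

lemma ctrl_tendsto (A : Matrix (Fin n) (Fin n) ℝ) (B : Matrix (Fin n) (Fin m) ℝ)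
    (S : Matrix (Fin m) (Fin m) ℝ) (hA : IsHurwitz A) :
    Filter.Tendsto (fun T : ℝ => ctrlGram A B T S) Filter.atTop (nhds (B * S * Bᵀ)) := by
  obtain ⟨M1, c1, hM1, hc1, h1⟩ := hurwitz_decay A hA
  obtain ⟨M2, c2, hM2, hc2, h2⟩ := hurwitz_decay Aᵀ (hurwitz_transpose hA)
  set K := B * S * Bᵀ with hK
  set γ := c1 + c2 with hγdef
  have hγ : 0 < γ := by rw [hγdef]; linarith
  set Q := M1 * ‖K‖ * M2 with hQ
  have hQ0 : 0 ≤ Q := by positivity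
  have key : ∀ T : ℝ, 1 ≤ T →
      ‖ctrlGram A B T S - K‖ ≤ Q * Real.exp (-γ * T) * (1 - Real.exp (-γ * T))⁻¹ := by
    intro T hT
    have hT0 : (0:ℝ) < T := lt_of_lt_of_le one_pos hT
    set q := Real.exp (-γ * T) with hq
    have hq0 : (0:ℝ) ≤ q := (Real.exp_pos _).le
    have hq1 : q < 1 := by
      rw [hq, Real.exp_lt_one_iff]
      nlinarith
    have hterm : ∀ k : ℕ, ‖exp (((k:ℝ) * T) • A) * K * exp (((k:ℝ) * T) • Aᵀ)‖
        ≤ Q * q ^ k := by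
      intro k
      have hkT : (0:ℝ) ≤ (k:ℝ) * T := by positivity
      have hab : Real.exp (-(c1 * ((k:ℝ) * T))) * Real.exp (-(c2 * ((k:ℝ) * T))) = q ^ k := by
        rw [← Real.exp_add, hq, ← Real.exp_nat_mul]
        congr 1
        rw [hγdef]
        ring
      calc ‖exp (((k:ℝ) * T) • A) * K * exp (((k:ℝ) * T) • Aᵀ)‖
          ≤ ‖exp (((k:ℝ) * T) • A) * K‖ * ‖exp (((k:ℝ) * T) • Aᵀ)‖ := norm_mul_le _ _
      _ ≤ (‖exp (((k:ℝ) * T) • A)‖ * ‖K‖) * ‖exp (((k:ℝ) * T) • Aᵀ)‖ :=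
          mul_le_mul_of_nonneg_right (norm_mul_le _ _) (norm_nonneg _)
      _ ≤ ((M1 * Real.exp (-(c1 * ((k:ℝ) * T)))) * ‖K‖) * (M2 * Real.exp (-(c2 * ((k:ℝ) * T)))) := by
          apply mul_le_mul
          · exact mul_le_mul_of_nonneg_right (h1 _ hkT) (norm_nonneg _)
          · exact h2 _ hkT
          · exact norm_nonneg _
          · positivity
      _ = Q * q ^ k := by rw [← hab, hQ]; ring
    have hsum : Summable (fun k : ℕ =>
        exp (((k:ℝ) * T) • A) * K * exp (((k:ℝ) * T) • Aᵀ)) :=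
      Summable.of_norm_bounded ((summable_geometric_of_lt_one hq0 hq1).mul_left Q) hterm
    have hf0 : exp ((((0:ℕ):ℝ) * T) • A) * K * exp ((((0:ℕ):ℝ) * T) • Aᵀ) = K := by
      norm_num
    have hdiff : ctrlGram A B T S - K = ∑' k : ℕ,
        exp ((((k+1:ℕ):ℝ) * T) • A) * K * exp ((((k+1:ℕ):ℝ) * T) • Aᵀ) := by
      rw [ctrlGram, hsum.tsum_eq_zero_add, hf0, add_sub_cancel_left]
    rw [hdiff]
    have hbound : ∀ k : ℕ, ‖exp ((((k+1:ℕ):ℝ) * T) • A) * K * exp ((((k+1:ℕ):ℝ) * T) • Aᵀ)‖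
        ≤ (Q * q) * q ^ k := by
      intro k
      calc ‖exp ((((k+1:ℕ):ℝ) * T) • A) * K * exp ((((k+1:ℕ):ℝ) * T) • Aᵀ)‖
          ≤ Q * q ^ (k+1) := hterm (k+1)
      _ = (Q * q) * q ^ k := by rw [pow_succ]; ring
    have hgeo : HasSum (fun k : ℕ => (Q * q) * q ^ k) ((Q * q) * (1 - q)⁻¹) :=
      (hasSum_geometric_of_lt_one hq0 hq1).mul_left (Q * q)
    have := tsum_of_norm_bounded hgeo hbound
    calc ‖∑' k : ℕ, exp ((((k+1:ℕ):ℝ) * T) • A) * K * exp ((((k+1:ℕ):ℝ) * T) • Aᵀ)‖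
        ≤ (Q * q) * (1 - q)⁻¹ := this
    _ = Q * Real.exp (-γ * T) * (1 - Real.exp (-γ * T))⁻¹ := by rw [hq]
  have hqt : Filter.Tendsto (fun T : ℝ => Real.exp (-γ * T)) Filter.atTop (nhds 0) := by
    have h := Real.tendsto_exp_neg_atTop_nhds_zero.comp
      (Filter.Tendsto.const_mul_atTop hγ Filter.tendsto_id)
    simpa [Function.comp_def, neg_mul] using h
  have hg0 : Filter.Tendsto (fun T : ℝ => Q * Real.exp (-γ * T) * (1 - Real.exp (-γ * T))⁻¹)
      Filter.atTop (nhds 0) := by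
    have h := ((hqt.const_mul Q).mul
      (((tendsto_const_nhds (x := (1:ℝ))).sub hqt).inv₀ (by norm_num)))
    simpa using h
  have hdiff0 : Filter.Tendsto (fun T : ℝ => ctrlGram A B T S - K) Filter.atTop (nhds 0) := by
    refine squeeze_zero_norm' (f := fun T : ℝ => ctrlGram A B T S - K)
      (a := fun T : ℝ => Q * Real.exp (-γ * T) * (1 - Real.exp (-γ * T))⁻¹) ?_ hg0
    filter_upwards [Filter.eventually_ge_atTop 1] with T hT
    exact key T hT
  have h2 := hdiff0.add_const K
  rw [zero_add] at h2
  refine h2.congr fun T => ?_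
  abel

end Analysis2

section Analysis3

variable {n m p : ℕ}

lemma det_pos_limit {P K : Matrix (Fin n) (Fin n) ℝ} (hP : P.PosSemidef) (hK : K.PosSemidef)
    {σ2 : ℝ} (hσ : 0 < σ2) :
    0 < ((1 : Matrix (Fin n) (Fin n) ℝ) + σ2⁻¹ • (P * K)).det := by
  obtain ⟨R, hRR, hRh⟩ : ∃ R : Matrix (Fin n) (Fin n) ℝ, R * R = P ∧ Rᴴ = R := by
    open scoped MatrixOrder in
    exact ⟨CFC.sqrt P, CFC.sqrt_mul_sqrt_self P hP.nonneg, (CFC.sqrt_nonneg P).posSemidef.1⟩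
  have h1 : ((1 : Matrix (Fin n) (Fin n) ℝ) + σ2⁻¹ • (P * K)).det
      = ((1 : Matrix (Fin n) (Fin n) ℝ) + σ2⁻¹ • (R * K * R)).det := by
    have e1 : σ2⁻¹ • (P * K) = R * (σ2⁻¹ • (R * K)) := by
      rw [Matrix.mul_smul, ← Matrix.mul_assoc, hRR]
    rw [e1, Matrix.det_one_add_mul_comm, Matrix.smul_mul, Matrix.mul_assoc]
  have h2 : (R * K * R).PosSemidef := by
    have := hK.mul_mul_conjTranspose_same R
    rwa [hRh] at this
  have h3 := psd_smul (inv_nonneg.mpr hσ.le) h2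
  have h4 : ((1 : Matrix (Fin n) (Fin n) ℝ) + σ2⁻¹ • (R * K * R)).PosDef :=
    Matrix.PosDef.add_posSemidef Matrix.PosDef.one h3
  rw [h1]
  exact h4.det_pos

lemma main_aux (A : Matrix (Fin n) (Fin n) ℝ) (B : Matrix (Fin n) (Fin m) ℝ)
    (C : Matrix (Fin p) (Fin n) ℝ) (hA : IsHurwitz A) (σ2 : ℝ) (hσ : 0 < σ2)
    (S : Matrix (Fin m) (Fin m) ℝ) (hS : S.PosSemidef) :
    Filter.Tendsto (fun T : ℝ => infoFun A B C T σ2 S) Filter.atTop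
      (nhds ((1 / 2) * Real.logb 2
        ((1 : Matrix (Fin n) (Fin n) ℝ) + σ2⁻¹ •
          ((∫ t in Set.Ioi (0:ℝ),
              NormedSpace.exp (t • Aᵀ) * (Cᵀ * C) * NormedSpace.exp (t • A)) *
            (B * S * Bᵀ))).det)) := by
  set O := ∫ t in Set.Ioi (0:ℝ), exp (t • Aᵀ) * (Cᵀ * C) * exp (t • A) with hOdef
  set K := B * S * Bᵀ with hKdef
  have hKpsd : K.PosSemidef := by
    have := hS.mul_mul_conjTranspose_same B
    rwa [Matrix.conjTranspose_eq_transpose_of_trivial] at this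
  have hOpsd : O.PosSemidef := obs_psd A C hA
  have hL : 0 < ((1 : Matrix (Fin n) (Fin n) ℝ) + σ2⁻¹ • (O * K)).det :=
    det_pos_limit hOpsd hKpsd hσ
  have hOt := obs_tendsto A C hA
  have hWt := ctrl_tendsto A B S hA
  have hNum : Filter.Tendsto
      (fun T : ℝ => (σ2 • (1 : Matrix (Fin n) (Fin n) ℝ) + obsGram A C T * ctrlGram A B T S).det)
      Filter.atTop (nhds ((σ2 • (1 : Matrix (Fin n) (Fin n) ℝ) + O * K).det)) := by
    have h1 : Filter.Tendsto
        (fun T : ℝ => σ2 • (1 : Matrix (Fin n) (Fin n) ℝ) + obsGram A C T * ctrlGram A B T S)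
        Filter.atTop (nhds (σ2 • (1 : Matrix (Fin n) (Fin n) ℝ) + O * K)) :=
      tendsto_const_nhds.add (hOt.mul hWt)
    exact ((continuous_id.matrix_det).tendsto _).comp h1
  have hWt0 : Filter.Tendsto (fun T : ℝ => ctrlGram A B T S - K) Filter.atTop (nhds 0) := by
    have := hWt.sub (tendsto_const_nhds (x := K))
    simpa [hKdef] using this
  have hDen : Filter.Tendsto
      (fun T : ℝ => (σ2 • (1 : Matrix (Fin n) (Fin n) ℝ) +
        obsGram A C T * (ctrlGram A B T S - K)).det)
      Filter.atTop (nhds ((σ2 • (1 : Matrix (Fin n) (Fin n) ℝ)).det)) := by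
    have h1 : Filter.Tendsto
        (fun T : ℝ => σ2 • (1 : Matrix (Fin n) (Fin n) ℝ) +
          obsGram A C T * (ctrlGram A B T S - K))
        Filter.atTop (nhds (σ2 • (1 : Matrix (Fin n) (Fin n) ℝ) + O * 0)) :=
      tendsto_const_nhds.add (hOt.mul hWt0)
    rw [mul_zero, add_zero] at h1
    exact ((continuous_id.matrix_det).tendsto _).comp h1
  have hDpos : (0:ℝ) < (σ2 • (1 : Matrix (Fin n) (Fin n) ℝ)).det := by
    rw [Matrix.det_smul, Matrix.det_one, mul_one]
    positivity
  have hratio := hNum.div hDen hDpos.ne'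
  have hid : (σ2 • (1 : Matrix (Fin n) (Fin n) ℝ) + O * K).det
        / (σ2 • (1 : Matrix (Fin n) (Fin n) ℝ)).det
      = ((1 : Matrix (Fin n) (Fin n) ℝ) + σ2⁻¹ • (O * K)).det := by
    have e1 : σ2 • ((1 : Matrix (Fin n) (Fin n) ℝ) + σ2⁻¹ • (O * K))
        = σ2 • (1 : Matrix (Fin n) (Fin n) ℝ) + O * K := by
      rw [smul_add, smul_smul, mul_inv_cancel₀ hσ.ne', one_smul]
    rw [← e1, Matrix.det_smul, Matrix.det_smul, Matrix.det_one, mul_one]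
    rw [mul_comm, mul_div_assoc, div_self (by positivity : σ2 ^ Fintype.card (Fin n) ≠ 0), mul_one]
  have hlimpos : 0 < (σ2 • (1 : Matrix (Fin n) (Fin n) ℝ) + O * K).det
      / (σ2 • (1 : Matrix (Fin n) (Fin n) ℝ)).det := by
    rw [hid]
    exact hL
  have hlog := (hratio.log hlimpos.ne').div_const (Real.log 2)
  have hfinal := hlog.const_mul (1/2 : ℝ)
  have heq : (fun T : ℝ => (1/2 : ℝ) * (Real.log
        ((σ2 • (1 : Matrix (Fin n) (Fin n) ℝ) + obsGram A C T * ctrlGram A B T S).det /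
         (σ2 • (1 : Matrix (Fin n) (Fin n) ℝ) +
            obsGram A C T * (ctrlGram A B T S - K)).det) / Real.log 2))
      = fun T : ℝ => infoFun A B C T σ2 S := by
    funext T
    rw [infoFun, Real.logb]
  simp only [Pi.div_apply] at hfinal
  rw [heq] at hfinal
  have hval : (1/2 : ℝ) * (Real.log ((σ2 • (1 : Matrix (Fin n) (Fin n) ℝ) + O * K).det
        / (σ2 • (1 : Matrix (Fin n) (Fin n) ℝ)).det) / Real.log 2)
      = (1 / 2) * Real.logb 2 (((1 : Matrix (Fin n) (Fin n) ℝ) + σ2⁻¹ • (O * K)).det) := by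
    rw [hid, Real.logb]
  rw [hval] at hfinal
  exact hfinal

end Analysis3

end AuxProofs


/-- as `T → ∞`, `f_{T,σ²}(Σ)` converges to
`(1/2)·log₂ det(I + (1/σ²) O_∞ BΣBᵀ)`, where `O_∞` is the infinite-horizon
observability Gramian. -/
theorem stmt6 {n m p : ℕ} (A : Matrix (Fin n) (Fin n) ℝ) (B : Matrix (Fin n) (Fin m) ℝ)
    (C : Matrix (Fin p) (Fin n) ℝ) (hA : IsHurwitz A) (σ2 : ℝ) (hσ : 0 < σ2)
    (S : Matrix (Fin m) (Fin m) ℝ) (hS : S.PosSemidef) :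
    Filter.Tendsto (fun T : ℝ => infoFun A B C T σ2 S) Filter.atTop
      (nhds ((1 / 2) * Real.logb 2
        ((1 : Matrix (Fin n) (Fin n) ℝ) + σ2⁻¹ •
          ((∫ t in Set.Ioi (0:ℝ),
              NormedSpace.exp (t • Aᵀ) * (Cᵀ * C) * NormedSpace.exp (t • A)) *
            (B * S * Bᵀ))).det)) := by
  exact main_aux A B C hA σ2 hσ S hS
end

section
/- Let P ∈ ℂ^{n×n} be a Hermitian positive definite matrix. Then for every index i, the i-th diagonal entry of P⁻¹ is a real number at least 1/P_{ii}; equivalently, the diagonal matrix formed by the diagonal entries of P⁻¹ minus the inverse of the diagonal matrix formed by the diagonal entries of P is positive semidefinite. -/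
open Matrix
open scoped ComplexOrder

/-- for a Hermitian positive definite `P ∈ ℂ^{n×n}`, each diagonal entry of
`P⁻¹` is (a real number) at least `1/P_{ii}`; equivalently,
`diag(P⁻¹) − (diag P)⁻¹ ⪰ 0`. -/
theorem stmt12 {n : ℕ} (P : Matrix (Fin n) (Fin n) ℂ) (hP : P.PosDef) :
    (∀ i, (P⁻¹ i i).im = 0 ∧ (P i i)⁻¹ ≤ P⁻¹ i i) ∧
    (Matrix.diagonal (fun i => P⁻¹ i i) -
      (Matrix.diagonal fun i => P i i)⁻¹).PosSemidef := by
  have hPinv : (P⁻¹).PosDef := hP.inv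
  have hdet : IsUnit P.det := (Matrix.isUnit_iff_isUnit_det _).1 hP.isUnit
  have h1 : P * P⁻¹ = 1 := Matrix.mul_nonsing_inv _ hdet
  have h2 : P⁻¹ * P = 1 := Matrix.nonsing_inv_mul _ hdet
  -- diagonal entries of P are positive
  have hdiag : ∀ i, 0 < P i i := by
    intro i
    have := hP.dotProduct_mulVec_pos (x := Pi.single i 1) (by simp [Function.ne_iff])
    simpa [Matrix.mulVec_single, dotProduct_single, ← Pi.single_star,
      single_dotProduct] using this
  have hPii_ne : ∀ i, P i i ≠ 0 := fun i => (hdiag i).ne'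
  have hkey : ∀ i, 0 ≤ P⁻¹ i i - (P i i)⁻¹ := by
    intro i
    set e : Fin n → ℂ := Pi.single i 1 with he
    set c : ℂ := (P i i)⁻¹ with hc
    set v : Fin n → ℂ := P⁻¹ *ᵥ e - c • e with hv
    have h0 : 0 ≤ star v ⬝ᵥ P *ᵥ v := hP.posSemidef.dotProduct_mulVec_nonneg v
    have hstar : star (P⁻¹ *ᵥ e) = star e ᵥ* P⁻¹ := by
      rw [star_mulVec, hPinv.isHermitian.eq]
    have ht1 : star (P⁻¹ *ᵥ e) ⬝ᵥ P *ᵥ (P⁻¹ *ᵥ e) = P⁻¹ i i := by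
      rw [Matrix.mulVec_mulVec, h1, Matrix.one_mulVec, hstar,
        ← Matrix.dotProduct_mulVec]
      simp [he, Matrix.mulVec_single, single_dotProduct, ← Pi.single_star]
    have ht2 : star (P⁻¹ *ᵥ e) ⬝ᵥ P *ᵥ e = 1 := by
      rw [hstar, ← Matrix.dotProduct_mulVec, Matrix.mulVec_mulVec, h2,
        Matrix.one_mulVec]
      simp [he, single_dotProduct, ← Pi.single_star]
    have ht3 : star e ⬝ᵥ P *ᵥ (P⁻¹ *ᵥ e) = 1 := by
      rw [Matrix.mulVec_mulVec, h1, Matrix.one_mulVec]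
      simp [he, single_dotProduct, ← Pi.single_star]
    have ht4 : star e ⬝ᵥ P *ᵥ e = P i i := by
      simp [he, Matrix.mulVec_single, single_dotProduct, ← Pi.single_star]
    have hcstar : star c = c := by
      rw [hc, show (star ((P i i)⁻¹) : ℂ) = (star (P i i))⁻¹ from map_inv₀ (starRingEnd ℂ) _,
        hP.isHermitian.apply i i]
    have hexp : star v ⬝ᵥ P *ᵥ v = P⁻¹ i i - c := by
      rw [hv]
      simp only [star_sub, star_smul, Matrix.mulVec_sub, Matrix.mulVec_smul,
        sub_dotProduct, dotProduct_sub, smul_dotProduct,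
        dotProduct_smul, ht1, ht2, ht3, ht4, hcstar, smul_eq_mul]
      rw [hc]
      field_simp [hPii_ne i]
      ring
    rw [hexp] at h0
    exact h0
  constructor
  · intro i
    refine ⟨?_, ?_⟩
    · exact Complex.conj_eq_iff_im.1 (hPinv.isHermitian.apply i i)
    · exact sub_nonneg.mp (hkey i)
  · have hinv : (Matrix.diagonal fun i => P i i)⁻¹ =
        Matrix.diagonal fun i => (P i i)⁻¹ := by
      apply Matrix.inv_eq_right_inv
      rw [Matrix.diagonal_mul_diagonal,
        show (fun i => P i i * (P i i)⁻¹) = fun _ => (1 : ℂ) from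
          funext fun i => mul_inv_cancel₀ (hPii_ne i), Matrix.diagonal_one]
    rw [hinv, Matrix.diagonal_sub]
    exact Matrix.posSemidef_diagonal_iff.mpr hkey
end

section
/- Let P > 0, σ² > 0, and λ ∈ ℂ with Re λ < 0, and define g(T) := (1/(2T))·log₂( (P/σ² − 2·Re λ) / ((P/σ²)·e^{2T·Re λ} − 2·Re λ) ) for T > 0. Then g is monotonically decreasing on (0, ∞), and g(T) tends to (1/ln 2)·((P/σ²)·Re λ) / (2·Re λ − P/σ²) as T → 0⁺. -/
open Real Set Filter Topology

/-- for `P, σ² > 0` and `Re λ < 0`, the function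
`g(T) = (1/(2T)) log₂((P/σ² − 2Re λ)/((P/σ²) e^{2T Re λ} − 2Re λ))` is monotonically
decreasing on `(0,∞)` and tends to `(1/ln 2)·((P/σ²)·Re λ)/(2Re λ − P/σ²)` as `T → 0⁺`. -/
theorem stmt15 (P σ2 : ℝ) (hP : 0 < P) (hσ : 0 < σ2) (lam : ℂ) (hl : lam.re < 0) :
    AntitoneOn (fun T : ℝ => (1 / (2 * T)) * Real.logb 2
        ((P / σ2 - 2 * lam.re) /
          ((P / σ2) * Real.exp (2 * T * lam.re) - 2 * lam.re))) (Set.Ioi 0) ∧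
    Filter.Tendsto (fun T : ℝ => (1 / (2 * T)) * Real.logb 2
        ((P / σ2 - 2 * lam.re) /
          ((P / σ2) * Real.exp (2 * T * lam.re) - 2 * lam.re)))
      (nhdsWithin 0 (Set.Ioi 0))
      (nhds ((1 / Real.log 2) * ((P / σ2) * lam.re) / (2 * lam.re - P / σ2))) := by
  set a := P / σ2 with ha_def
  set c := 2 * lam.re with hc_def
  have ha : 0 < a := div_pos hP hσ
  have hc : c < 0 := by simp [hc_def]; linarith
  have hd : ∀ T : ℝ, 0 < a * Real.exp (c * T) - c := fun T => by
    have := mul_pos ha (Real.exp_pos (c * T)); linarith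
  -- h and its derivative
  set h : ℝ → ℝ := fun T => Real.log (a - c) - Real.log (a * Real.exp (c * T) - c) with hh_def
  set h' : ℝ → ℝ := fun T => -(a * c * Real.exp (c * T)) / (a * Real.exp (c * T) - c) with hh'_def
  have hder : ∀ T : ℝ, HasDerivAt h (h' T) T := by
    intro T
    have d1 : HasDerivAt (fun T : ℝ => c * T) c T := by
      simpa using (hasDerivAt_id T).const_mul c
    have d2 : HasDerivAt (fun T : ℝ => Real.exp (c * T)) (Real.exp (c * T) * c) T :=
      (Real.hasDerivAt_exp (c * T)).comp T d1
    have d3 : HasDerivAt (fun T : ℝ => a * Real.exp (c * T) - c)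
        (a * (Real.exp (c * T) * c)) T := (d2.const_mul a).sub_const c
    have d4 : HasDerivAt (fun T : ℝ => Real.log (a * Real.exp (c * T) - c))
        (a * (Real.exp (c * T) * c) / (a * Real.exp (c * T) - c)) T :=
      d3.log (ne_of_gt (hd T))
    have d5 : HasDerivAt (fun T : ℝ => Real.log (a - c) - Real.log (a * Real.exp (c * T) - c))
        (0 - a * (Real.exp (c * T) * c) / (a * Real.exp (c * T) - c)) T := (hasDerivAt_const T (Real.log (a - c))).sub d4
    convert d5 using 1
    simp [hh'_def]; ring
  have hdiff : Differentiable ℝ h := fun T => (hder T).differentiableAt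
  have hderiv_eq : deriv h = h' := funext fun T => (hder T).deriv
  -- h' is antitone
  have hanti' : Antitone h' := by
    intro x y hxy
    have hex : Real.exp (c * y) ≤ Real.exp (c * x) := by
      apply Real.exp_le_exp.2
      nlinarith
    have hx := hd x; have hy := hd y
    have hex0 : 0 < Real.exp (c * x) := Real.exp_pos _
    have hey0 : 0 < Real.exp (c * y) := Real.exp_pos _
    rw [hh'_def]
    rw [div_le_div_iff₀ (hd y) (hd x)]
    nlinarith [mul_le_mul_of_nonneg_left hex (by positivity : (0:ℝ) ≤ a * c ^ 2)]
  have hconc : ConcaveOn ℝ univ h := Antitone.concaveOn_univ_of_deriv hdiff (by rw [hderiv_eq]; exact hanti')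
  have h0 : h 0 = 0 := by simp [hh_def]
  -- key slope inequality for concave functions
  have hslope : ∀ s t : ℝ, 0 < s → s ≤ t → h t / t ≤ h s / s := by
    intro s t hs hst
    rcases eq_or_lt_of_le hst with rfl | hst
    · exact le_refl _
    · have ht : 0 < t := hs.trans hst
      have hθ : 0 ≤ s / t := le_of_lt (div_pos hs ht)
      have hθ1 : 0 ≤ 1 - s / t := by
        have : s / t ≤ 1 := (div_le_one ht).2 hst.le
        linarith
      have := hconc.2 (mem_univ t) (mem_univ 0) hθ hθ1 (by ring)
      simp only [smul_eq_mul, mul_zero, add_zero, h0] at this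
      rw [div_mul_cancel₀ _ (ne_of_gt ht)] at this
      rw [div_le_div_iff₀ ht hs]
      calc h t * s = (s / t * h t) * t := by field_simp
        _ ≤ h s * t := by nlinarith
  -- rewrite g in terms of h
  have hgeq : ∀ T : ℝ, (1 / (2 * T)) * Real.logb 2
      ((a - c) / (a * Real.exp (2 * T * lam.re) - c)) =
      (1 / (2 * Real.log 2)) * (h T / T) := by
    intro T
    have h2T : (2 : ℝ) * T * lam.re = c * T := by rw [hc_def]; ring
    rw [h2T, Real.logb, Real.log_div (ne_of_gt (by linarith : (0:ℝ) < a - c))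
      (ne_of_gt (hd T)), hh_def]
    have hl2 : Real.log 2 ≠ 0 := ne_of_gt (Real.log_pos one_lt_two)
    field_simp
  constructor
  · intro s hs t ht hst
    simp only [mem_Ioi] at hs ht
    simp only [hgeq s, hgeq t]
    have hlog2 : 0 < Real.log 2 := Real.log_pos (by norm_num)
    have : h t / t ≤ h s / s := hslope s t hs hst
    have hpos : 0 < 1 / (2 * Real.log 2) := by positivity
    nlinarith
  · -- limit
    have hd0 : HasDerivAt h (h' 0) 0 := hder 0
    have hsl : Tendsto (slope h 0) (𝓝[≠] 0) (𝓝 (h' 0)) :=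
      hasDerivAt_iff_tendsto_slope.1 hd0
    have hmono : 𝓝[>] (0:ℝ) ≤ 𝓝[≠] 0 :=
      nhdsWithin_mono 0 (fun x hx => ne_of_gt hx)
    have hsl' : Tendsto (fun T : ℝ => h T / T) (𝓝[>] 0) (𝓝 (h' 0)) := by
      refine (hsl.mono_left hmono).congr fun T => ?_
      simp [slope_def_field, h0]
    have := hsl'.const_mul (1 / (2 * Real.log 2))
    have heq2 : (1 / (2 * Real.log 2)) * h' 0 =
        (1 / Real.log 2) * (a * lam.re) / (2 * lam.re - a) := by
      have hl2 : Real.log 2 ≠ 0 := ne_of_gt (Real.log_pos one_lt_two)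
      rw [hh'_def]
      simp only [mul_zero, Real.exp_zero, mul_one]
      rw [hc_def]
      have hne : a - 2 * lam.re ≠ 0 := by linarith
      have hne2 : 2 * lam.re - a ≠ 0 := by linarith
      field_simp
      ring
    rw [← heq2]
    refine Tendsto.congr' ?_ this
    filter_upwards [self_mem_nhdsWithin] with T hT
    exact (hgeq T).symm
end
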